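/- arXiv:2512.05260 — 13 statements merged into one kernel-verified Lean document; each statement's English description precedes it below -/
import Mathlib

section
/- For all integers p ≥ 1, the sum over j = 0 to p-1 of binom(2p+1, 2j+1) · 2^{2p-2j} · B_{2p-2j} equals 2p, where B_n denotes the n-th Bernoulli number. -/
open PowerSeries Finset Nat

lemma aux_ps : (rescale (2:ℚ) (bernoulliPowerSeries ℚ)) * (exp ℚ + 1) = 2 * bernoulliPowerSeries ℚ := by
  have hB := bernoulliPowerSeries_mul_exp_sub_one ℚ
  have hne : exp ℚ - 1 ≠ 0 := fun h => by
    simpa [PowerSeries.coeff_exp] using congrArg (PowerSeries.coeff 1) h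
  apply mul_right_cancel₀ hne
  have h2 : rescale (2:ℚ) (bernoulliPowerSeries ℚ * (exp ℚ - 1)) = rescale (2:ℚ) X := by rw [hB]
  rw [map_mul, rescale_X] at h2
  have hre : rescale (2:ℚ) (exp ℚ - 1) = (exp ℚ + 1) * (exp ℚ - 1) := by
    have h := exp_pow_eq_rescale_exp (A := ℚ) 2
    push_cast at h
    rw [map_sub, map_one, ← h]
    ring
  rw [hre, ← mul_assoc] at h2
  rw [h2, mul_assoc, hB]
  have : (PowerSeries.C (R := ℚ)) 2 = (2 : ℚ⟦X⟧) := map_ofNat _ 2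
  rw [this]

lemma aux_coeff (n : ℕ) :
    ∑ i ∈ range (n + 1), (n.choose i : ℚ) * 2 ^ i * bernoulli i + 2 ^ n * bernoulli n
      = 2 * bernoulli n := by
  have haux := aux_ps
  rw [show (2 : ℚ⟦X⟧) * bernoulliPowerSeries ℚ = PowerSeries.C 2 * bernoulliPowerSeries ℚ by
    rw [map_ofNat]] at haux
  have h := congrArg (PowerSeries.coeff n) haux
  rw [PowerSeries.coeff_C_mul] at h
  simp only [PowerSeries.coeff_mul, Nat.sum_antidiagonal_eq_sum_range_succ_mk,
    coeff_rescale, bernoulliPowerSeries, PowerSeries.coeff_mk, map_add, PowerSeries.coeff_exp,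
    PowerSeries.coeff_one, PowerSeries.coeff_C_mul, Algebra.algebraMap_self, RingHom.id_apply, one_div] at h
  simp only [mul_add, Finset.sum_add_distrib, mul_ite, mul_one, mul_zero] at h
  rw [Finset.sum_congr rfl (fun x hx => show
      (if n - x = 0 then 2 ^ x * (bernoulli x / (x ! : ℚ)) else 0)
        = if x = n then 2 ^ n * (bernoulli n / (n ! : ℚ)) else 0 by
    rcases eq_or_ne x n with rfl | hxn
    · simp
    · rw [if_neg hxn, if_neg]
      simp only [Finset.mem_range] at hx
      omega), Finset.sum_ite_eq' (Finset.range n.succ) n] at h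
  rw [if_pos (Finset.self_mem_range_succ n)] at h
  have hfact : ∀ m : ℕ, (m ! : ℚ) ≠ 0 := fun m => Nat.cast_ne_zero.2 (Nat.factorial_ne_zero m)
  calc ∑ i ∈ range (n + 1), (n.choose i : ℚ) * 2 ^ i * bernoulli i + 2 ^ n * bernoulli n
      = (n ! : ℚ) * (∑ x ∈ Finset.range n.succ,
          2 ^ x * (bernoulli x / (x ! : ℚ)) * ((((n - x)! : ℚ))⁻¹)
          + 2 ^ n * (bernoulli n / (n ! : ℚ))) := by
        rw [mul_add, Finset.mul_sum]
        congr 1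
        · apply Finset.sum_congr rfl
          intro i hi
          rw [Nat.cast_choose ℚ (Nat.lt_succ_iff.mp (Finset.mem_range.mp hi))]
          field_simp
        · field_simp
    _ = (n ! : ℚ) * (2 * (bernoulli n / (n ! : ℚ))) := by rw [h]
    _ = 2 * bernoulli n := by field_simp

lemma aux_split (f : ℕ → ℚ) (n : ℕ) :
    ∑ i ∈ range (2 * n + 2), f i
      = ∑ j ∈ range (n + 1), f (2 * j) + ∑ j ∈ range (n + 1), f (2 * j + 1) := by
  induction n with
  | zero => simp [Finset.sum_range_succ]
  | succ n ih =>
      have h2 : 2 * (n + 1) + 2 = (2 * n + 2) + 1 + 1 := by ring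
      rw [h2, Finset.sum_range_succ, Finset.sum_range_succ, ih,
        Finset.sum_range_succ (fun j => f (2 * j)) (n + 1),
        Finset.sum_range_succ (fun j => f (2 * j + 1)) (n + 1)]
      ring_nf

lemma bernoulli_odd (k : ℕ) (hk : 1 ≤ k) : bernoulli (2 * k + 1) = 0 := by
  rw [bernoulli_eq_bernoulli'_of_ne_one (by omega)]
  exact bernoulli'_eq_zero_of_odd ⟨k, by ring⟩ (by omega)

theorem bernoulli_sum_eq_two_p (p : ℕ) (hp : 1 ≤ p) :
    ∑ j ∈ Finset.range p,
      (Nat.choose (2 * p + 1) (2 * j + 1) : ℚ) * 2 ^ (2 * p - 2 * j) *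
        bernoulli (2 * p - 2 * j) = 2 * p := by
  have h := aux_coeff (2 * p + 1)
  rw [bernoulli_odd p hp] at h
  simp only [mul_zero, add_zero, mul_zero] at h
  -- h : ∑ i ∈ range (2p+2), C(2p+1,i) 2^i B_i = 0
  rw [show 2 * p + 1 + 1 = 2 * p + 2 by ring,
    aux_split (fun i => ((2 * p + 1).choose i : ℚ) * 2 ^ i * bernoulli i) p] at h
  rw [Finset.sum_range_succ' (fun j => ((2 * p + 1).choose (2 * j) : ℚ) * 2 ^ (2 * j) * bernoulli (2 * j)) p,
    Finset.sum_range_succ' (fun j => ((2 * p + 1).choose (2 * j + 1) : ℚ) * 2 ^ (2 * j + 1) * bernoulli (2 * j + 1)) p] at h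
  have hodd : ∑ j ∈ Finset.range p,
      ((2 * p + 1).choose (2 * (j + 1) + 1) : ℚ) * 2 ^ (2 * (j + 1) + 1) * bernoulli (2 * (j + 1) + 1) = 0 := by
    apply Finset.sum_eq_zero
    intro j _
    rw [bernoulli_odd (j + 1) (by omega)]
    ring
  simp only [hodd, Nat.mul_zero, Nat.choose_zero_right, pow_zero, bernoulli_zero,
    Nat.mul_one, Nat.choose_one_right, bernoulli_one] at h
  rw [← Finset.sum_range_reflect]
  have hcongr : ∀ j ∈ Finset.range p,
      ((2 * p + 1).choose (2 * (p - 1 - j) + 1) : ℚ) * 2 ^ (2 * p - 2 * (p - 1 - j)) *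
          bernoulli (2 * p - 2 * (p - 1 - j))
        = ((2 * p + 1).choose (2 * (j + 1)) : ℚ) * 2 ^ (2 * (j + 1)) * bernoulli (2 * (j + 1)) := by
    intro j hj
    simp only [Finset.mem_range] at hj
    rw [show 2 * p - 2 * (p - 1 - j) = 2 * (j + 1) by omega,
      show 2 * (p - 1 - j) + 1 = (2 * p + 1) - (2 * (j + 1)) by omega,
      Nat.choose_symm (by omega)]
  rw [Finset.sum_congr rfl hcongr]
  rw [Nat.choose_one_right, bernoulli_one] at h
  push_cast at h ⊢
  linarith
end

section
/- For all integers p ≥ 1, the sum over j = 0 to p-1 of binom(2p+1, 2j+1) · 2^{2p-2j} · (2^{2p-2j} - 1) · B_{2p-2j} equals (2p+1)·(1 - E_{2p}), where B_n are Bernoulli numbers and E_n are Euler numbers. -/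
open Finset PowerSeries
open scoped ContDiff

lemma contDiff_iteratedDeriv {f : ℝ → ℝ} (hf : ContDiff ℝ ∞ f) (k : ℕ) :
    ContDiff ℝ ∞ (iteratedDeriv k f) := by
  induction k generalizing f with
  | zero => simpa using hf
  | succ k ih =>
    rw [iteratedDeriv_succ']
    exact ih (contDiff_infty_iff_deriv.mp hf).2

lemma pascal_sum (F G : ℕ → ℝ) (n : ℕ) :
    (∑ k ∈ range (n+1), (n.choose k : ℝ) * F (k+1) * G (n + 1 - (k+1)))
      + (∑ k ∈ range (n+1), (n.choose k : ℝ) * F k * G (n + 1 - k))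
    = ∑ k ∈ range (n+2), ((n+1).choose k : ℝ) * F k * G (n + 1 - k) := by
  rw [Finset.sum_range_succ' (fun k => ((n+1).choose k : ℝ) * F k * G (n + 1 - k)) (n+1)]
  have h1 : ∀ k ∈ range (n+1), ((n+1).choose (k+1) : ℝ) * F (k+1) * G (n + 1 - (k+1))
      = (n.choose k : ℝ) * F (k+1) * G (n+1-(k+1))
        + (n.choose (k+1) : ℝ) * F (k+1) * G (n+1-(k+1)) := by
    intro k _
    rw [Nat.choose_succ_succ, Nat.cast_add]; ring
  rw [Finset.sum_congr rfl h1, Finset.sum_add_distrib]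
  have h2 : (∑ k ∈ range (n+1), (n.choose (k+1) : ℝ) * F (k+1) * G (n+1-(k+1)))
      + ((n+1).choose 0 : ℝ) * F 0 * G (n+1-0)
      = ∑ k ∈ range (n+1), (n.choose k : ℝ) * F k * G (n + 1 - k) := by
    have h3 : ((n+1).choose 0 : ℝ) * F 0 * G (n+1-0) = (n.choose 0 : ℝ) * F 0 * G (n+1-0) := by
      simp
    rw [h3, ← Finset.sum_range_succ' (fun k => (n.choose k : ℝ) * F k * G (n + 1 - k)) (n+1),
      Finset.sum_range_succ]
    simp [Nat.choose_succ_self]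
  linarith [h2]

lemma iteratedDeriv_fun_mul' (f g : ℝ → ℝ) (hf : ContDiff ℝ ∞ f) (hg : ContDiff ℝ ∞ g) (n : ℕ) :
    iteratedDeriv n (fun x => f x * g x) =
      fun x => ∑ k ∈ range (n + 1),
        (n.choose k : ℝ) * iteratedDeriv k f x * iteratedDeriv (n - k) g x := by
  induction n with
  | zero => simp
  | succ n ih =>
    rw [iteratedDeriv_succ, ih]
    funext x
    have hdf : ∀ k, DifferentiableAt ℝ (iteratedDeriv k f) x :=
      fun k => ((contDiff_iteratedDeriv hf k).differentiable (by simp)).differentiableAt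
    have hdg : ∀ k, DifferentiableAt ℝ (iteratedDeriv k g) x :=
      fun k => ((contDiff_iteratedDeriv hg k).differentiable (by simp)).differentiableAt
    rw [deriv_fun_sum (fun k _ => by
      exact (((hdf k).const_mul _).mul (hdg (n - k))))]
    have hterm : ∀ k ∈ range (n+1),
        deriv (fun x => (n.choose k : ℝ) * iteratedDeriv k f x * iteratedDeriv (n - k) g x) x =
          (n.choose k : ℝ) * iteratedDeriv (k+1) f x * iteratedDeriv (n + 1 - (k+1)) g x
            + (n.choose k : ℝ) * iteratedDeriv k f x * iteratedDeriv (n + 1 - k) g x := by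
      intro k hk
      rw [mem_range] at hk
      have e1 : n + 1 - (k+1) = n - k := by omega
      have e2 : n + 1 - k = n - k + 1 := by omega
      rw [e1, e2]
      rw [show (fun x => (n.choose k : ℝ) * iteratedDeriv k f x * iteratedDeriv (n - k) g x)
        = fun x => (n.choose k : ℝ) * (iteratedDeriv k f x * iteratedDeriv (n - k) g x) by
          funext y; ring]
      rw [deriv_const_mul (d := fun y => iteratedDeriv k f y * iteratedDeriv (n-k) g y) _ ((hdf k).mul (hdg (n-k))), deriv_fun_mul (hdf k) (hdg (n-k)),
        ← iteratedDeriv_succ, ← iteratedDeriv_succ]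
      ring
    rw [Finset.sum_congr rfl hterm, Finset.sum_add_distrib]
    exact pascal_sum (fun k => iteratedDeriv k f x) (fun k => iteratedDeriv k g x) n


/-- The Euler numbers, defined by `2 / (e^t + e^{-t}) = Σ Eₙ tⁿ/n!`. -/
noncomputable def eulerNumber (n : ℕ) : ℝ :=
  iteratedDeriv n (fun t : ℝ => 2 / (Real.exp t + Real.exp (-t))) 0

lemma sech_eq : (fun t : ℝ => 2 / (Real.exp t + Real.exp (-t))) = fun t => (Real.cosh t)⁻¹ := by
  funext t
  have h : Real.exp t + Real.exp (-t) ≠ 0 := by positivity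
  rw [Real.cosh_eq]
  field_simp

lemma contDiff_sech : ContDiff ℝ ∞ (fun t : ℝ => 2 / (Real.exp t + Real.exp (-t))) := by
  apply ContDiff.div contDiff_const
  · exact Real.contDiff_exp.add (Real.contDiff_exp.comp contDiff_neg)
  · intro t; positivity

lemma iteratedDeriv_cosh (k : ℕ) :
    iteratedDeriv k Real.cosh = if Even k then Real.cosh else Real.sinh := by
  induction k with
  | zero => simp
  | succ k ih =>
    rw [iteratedDeriv_succ, ih]
    by_cases h : Even k
    · simp [h, Nat.even_add_one, Real.deriv_cosh]
    · simp [h, Nat.even_add_one, Real.deriv_sinh]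

lemma iteratedDeriv_cosh_zero (k : ℕ) :
    iteratedDeriv k Real.cosh 0 = if Even k then 1 else 0 := by
  rw [iteratedDeriv_cosh]
  split_ifs <;> simp

lemma euler_recurrence (n : ℕ) :
    ∑ k ∈ range (n + 1), (n.choose k : ℝ) * (if Even k then (1:ℝ) else 0) * eulerNumber (n - k)
      = if n = 0 then 1 else 0 := by
  have h1 : (fun x : ℝ => Real.cosh x * (2 / (Real.exp x + Real.exp (-x)))) = fun _ => (1:ℝ) := by
    funext t
    have := congrFun sech_eq t
    simp only [this]
    exact mul_inv_cancel₀ (ne_of_gt (Real.cosh_pos t))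
  have h2 := iteratedDeriv_fun_mul' Real.cosh (fun t : ℝ => 2 / (Real.exp t + Real.exp (-t)))
    Real.contDiff_cosh contDiff_sech n
  rw [h1] at h2
  have h3 : iteratedDeriv n (fun _ : ℝ => (1:ℝ)) 0 = if n = 0 then 1 else 0 := by
    cases n with
    | zero => simp
    | succ m =>
      rw [iteratedDeriv_succ']
      have : deriv (fun _ : ℝ => (1:ℝ)) = fun _ : ℝ => (0:ℝ) := by
        funext y; exact deriv_const y 1
      rw [this]
      have hz : ∀ m, iteratedDeriv m (fun _ : ℝ => (0:ℝ)) = fun _ => (0:ℝ) := by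
        intro m
        induction m with
        | zero => simp
        | succ m ihm =>
          rw [iteratedDeriv_succ, ihm]
          funext y
          exact deriv_const y 0
      rw [hz]
      simp
  rw [← h3]
  rw [h2]
  refine Finset.sum_congr rfl fun k _ => ?_
  rw [iteratedDeriv_cosh_zero]
  rfl


noncomputable def Cps : PowerSeries ℝ :=
  PowerSeries.mk fun n => if Even n then ((n.factorial : ℝ))⁻¹ else 0

noncomputable def Sps : PowerSeries ℝ :=
  PowerSeries.mk fun n => if Even n then 0 else ((n.factorial : ℝ))⁻¹

noncomputable def Tps : PowerSeries ℝ :=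
  PowerSeries.mk fun n => if Even n then 0 else
    2^(n+1) * (2^(n+1) - 1) * (bernoulli (n+1) : ℝ) / (((n+1).factorial : ℝ))

lemma coeff_exp_real (n : ℕ) : PowerSeries.coeff n (exp ℝ) = ((n.factorial : ℝ))⁻¹ := by
  rw [PowerSeries.coeff_exp]
  push_cast
  try rw [one_div]

lemma hCS_add : Cps + Sps = exp ℝ := by
  ext n
  rw [map_add, coeff_exp_real, Cps, Sps, PowerSeries.coeff_mk, PowerSeries.coeff_mk]
  split_ifs <;> ring

lemma hCS_sub : Cps - Sps = rescale (-1 : ℝ) (exp ℝ) := by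
  ext n
  rw [map_sub, PowerSeries.coeff_rescale, coeff_exp_real, Cps, Sps,
    PowerSeries.coeff_mk, PowerSeries.coeff_mk]
  rcases Nat.even_or_odd n with h | h
  · rw [if_pos h, if_pos h, h.neg_one_pow]; ring
  · rw [if_neg (Nat.not_even_iff_odd.mpr h), if_neg (Nat.not_even_iff_odd.mpr h), h.neg_one_pow]
    ring

lemma h_exp_inv : exp ℝ * rescale (-1 : ℝ) (exp ℝ) = 1 := by
  have h := PowerSeries.exp_mul_exp_eq_exp_add (1 : ℝ) (-1)
  rw [rescale_one] at h
  simpa [rescale_zero] using h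

lemma h_exp_pow (k : ℕ) : rescale ((k : ℝ)) (exp ℝ) = exp ℝ ^ k :=
  (PowerSeries.exp_pow_eq_rescale_exp k).symm

lemma h_exp_pow4 : rescale (4:ℝ) (exp ℝ) = exp ℝ ^ 4 := by
  have := h_exp_pow 4; norm_num at this; exact this

lemma h_exp_pow2 : rescale (2:ℝ) (exp ℝ) = exp ℝ ^ 2 := by
  have := h_exp_pow 2; norm_num at this; exact this

lemma coeff_bps (n : ℕ) :
    PowerSeries.coeff n (bernoulliPowerSeries ℝ) = (bernoulli n : ℝ) / (n.factorial : ℝ) := by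
  rw [bernoulliPowerSeries, PowerSeries.coeff_mk]
  push_cast
  rfl

lemma bernoulli_odd_zero {n : ℕ} (h : Odd n) (hn : 1 < n) : bernoulli n = 0 := by
  rw [bernoulli_eq_bernoulli'_of_ne_one (by omega)]
  exact bernoulli'_eq_zero_of_odd h hn

lemma hL1 : X * Tps = rescale (4:ℝ) (bernoulliPowerSeries ℝ)
    - rescale (2:ℝ) (bernoulliPowerSeries ℝ) + X := by
  ext n
  rw [map_add, map_sub, PowerSeries.coeff_rescale, PowerSeries.coeff_rescale, coeff_bps]
  match n with
  | 0 => simp [Tps]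
  | 1 =>
    rw [PowerSeries.coeff_succ_X_mul, Tps, PowerSeries.coeff_mk]
    norm_num [bernoulli_one]
  | (n+2) =>
    rw [PowerSeries.coeff_succ_X_mul, Tps, PowerSeries.coeff_mk, PowerSeries.coeff_X]
    rcases Nat.even_or_odd (n+2) with h | h
    · have hodd : ¬ Even (n+1) := by
        rintro ⟨r, hr⟩
        rcases h with ⟨m, hm⟩
        omega
      rw [if_neg hodd, if_neg (by omega)]
      have h4 : (4:ℝ)^(n+2) = 2^(n+2) * 2^(n+2) := by
        rw [show (4:ℝ) = 2*2 by norm_num, mul_pow]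
      rw [h4]
      ring
    · have heven : Even (n+1) := by
        rcases h with ⟨m, hm⟩
        exact ⟨m, by omega⟩
      rw [if_pos heven, if_neg (by omega)]
      have hb : bernoulli (n+2) = 0 := bernoulli_odd_zero h (by omega)
      rw [hb]
      push_cast
      ring

lemma hB_rescale (c : ℝ) :
    rescale c (bernoulliPowerSeries ℝ) * (rescale c (exp ℝ) - 1) = PowerSeries.C c * X := by
  have h := congrArg (rescale c) (bernoulliPowerSeries_mul_exp_sub_one ℝ)
  rw [map_mul, map_sub, map_one, rescale_X] at h
  exact h

lemma hA : Cps * Tps = Sps := by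
  have hdom : IsDomain (PowerSeries ℝ) := inferInstance
  set x := exp ℝ with hxdef
  set Em := rescale (-1 : ℝ) (exp ℝ) with hEmdef
  set R4 := rescale (4:ℝ) (bernoulliPowerSeries ℝ) with hR4
  set R2 := rescale (2:ℝ) (bernoulliPowerSeries ℝ) with hR2
  have hB4 : R4 * (x^4 - 1) = 4 * X := by
    rw [show x = exp ℝ from rfl, ← h_exp_pow4, show R4 = rescale (4:ℝ) (bernoulliPowerSeries ℝ) from rfl, hB_rescale 4,
      show (PowerSeries.C (R := ℝ)) 4 = (4 : PowerSeries ℝ) by simp [map_ofNat]]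
  have hB2 : R2 * (x^2 - 1) = 2 * X := by
    rw [show x = exp ℝ from rfl, ← h_exp_pow2, show R2 = rescale (2:ℝ) (bernoulliPowerSeries ℝ) from rfl, hB_rescale 2,
      show (PowerSeries.C (R := ℝ)) 2 = (2 : PowerSeries ℝ) by simp [map_ofNat]]
  have h0 : Cps + Sps = x := hCS_add
  have h1 : Cps - Sps = Em := hCS_sub
  have h2 : x * Em = 1 := h_exp_inv
  have hL1' : X * Tps = R4 - R2 + X := hL1
  have hM : (X : PowerSeries ℝ) * (x^4 - 1) * (x^2 - 1) ≠ 0 := by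
    apply mul_ne_zero (mul_ne_zero PowerSeries.X_ne_zero ?_) ?_
    · intro h
      have := congrArg (PowerSeries.coeff 1) h
      rw [map_sub, ← h_exp_pow4, PowerSeries.coeff_rescale, coeff_exp_real] at this
      simp at this
    · intro h
      have := congrArg (PowerSeries.coeff 1) h
      rw [map_sub, ← h_exp_pow2, PowerSeries.coeff_rescale, coeff_exp_real] at this
      simp at this
  apply mul_right_cancel₀ hM
  linear_combination (Cps*(x^4-1)*(x^2-1)) * hL1' + (Cps*(x^2-1)) * hB4
    - (Cps*(x^4-1)) * hB2 - ((X:PowerSeries ℝ)*(x^2-1)^2) * h0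
    + ((X:PowerSeries ℝ)*x^2*(x^2-1)^2) * h1 + ((X:PowerSeries ℝ)*x*(x^2-1)^2) * h2
noncomputable def Gps : PowerSeries ℝ :=
  PowerSeries.mk fun n => eulerNumber n / (n.factorial : ℝ)

lemma hCG : Cps * Gps = 1 := by
  ext n
  rw [PowerSeries.coeff_mul, Finset.Nat.sum_antidiagonal_eq_sum_range_succ_mk,
    PowerSeries.coeff_one]
  have key : ∀ k ∈ range (n+1),
      PowerSeries.coeff k Cps * PowerSeries.coeff (n-k) Gps
        = (n.factorial : ℝ)⁻¹ *
          ((n.choose k : ℝ) * (if Even k then (1:ℝ) else 0) * eulerNumber (n - k)) := by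
    intro k hk
    rw [mem_range] at hk
    rw [Cps, Gps, PowerSeries.coeff_mk, PowerSeries.coeff_mk]
    have hch : (n.choose k : ℝ)
        = (n.factorial : ℝ) / ((k.factorial : ℝ) * ((n-k).factorial : ℝ)) :=
      Nat.cast_choose ℝ (by omega)
    have h1 : (k.factorial : ℝ) ≠ 0 := Nat.cast_ne_zero.mpr k.factorial_ne_zero
    have h2 : ((n-k).factorial : ℝ) ≠ 0 := Nat.cast_ne_zero.mpr (n-k).factorial_ne_zero
    have h3 : (n.factorial : ℝ) ≠ 0 := Nat.cast_ne_zero.mpr n.factorial_ne_zero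
    split_ifs
    · rw [hch]
      field_simp
      try ring
    · simp
  rw [Finset.sum_congr rfl key, ← Finset.mul_sum, euler_recurrence n]
  split_ifs with h
  · subst h; simp
  · simp

lemma hC0 : Cps ≠ 0 := by
  intro h
  have h0 := congrArg (PowerSeries.coeff 0) h
  rw [Cps, PowerSeries.coeff_mk] at h0
  simp at h0

lemma hkey : Sps * Tps = Cps - Gps := by
  have hsq : Cps * Cps - Sps * Sps = 1 := by
    have h := h_exp_inv
    rw [← hCS_sub, ← hCS_add] at h
    linear_combination h
  apply mul_left_cancel₀ hC0
  linear_combination Sps * hA + hCG - hsq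

lemma sum_odd_support (m : ℕ) (F : ℕ → ℝ) (h : ∀ k, Even k → F k = 0) :
    ∑ k ∈ range (2*m+1), F k = ∑ j ∈ range m, F (2*j+1) := by
  induction m with
  | zero => simpa using h 0 Even.zero
  | succ m ih =>
    rw [show 2*(m+1)+1 = (2*m+1) + 1 + 1 by omega, Finset.sum_range_succ, Finset.sum_range_succ,
      ih, Finset.sum_range_succ, h (2*m+1+1) (by exact ⟨m+1, by omega⟩)]
    ring

theorem bernoulli_euler_sum (p : ℕ) (hp : 1 ≤ p) :
    ∑ j ∈ Finset.range p,
      (Nat.choose (2 * p + 1) (2 * j + 1) : ℝ) * 2 ^ (2 * p - 2 * j) *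
        (2 ^ (2 * p - 2 * j) - 1) * (bernoulli (2 * p - 2 * j) : ℝ) =
      (2 * p + 1) * (1 - eulerNumber (2 * p)) := by
  have h2p := congrArg (PowerSeries.coeff (2*p)) hkey
  rw [PowerSeries.coeff_mul, Finset.Nat.sum_antidiagonal_eq_sum_range_succ_mk, map_sub] at h2p
  set F : ℕ → ℝ := fun k => PowerSeries.coeff k Sps * PowerSeries.coeff (2*p - k) Tps with hF
  have hFe : ∀ k, Even k → F k = 0 := by
    intro k hk
    rw [hF]
    simp only [Sps, PowerSeries.coeff_mk, if_pos hk]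
    ring
  rw [sum_odd_support p F hFe] at h2p
  -- value of F at odd points
  have hterm : ∀ j ∈ range p,
      (Nat.choose (2 * p + 1) (2 * j + 1) : ℝ) * 2 ^ (2 * p - 2 * j) *
        (2 ^ (2 * p - 2 * j) - 1) * (bernoulli (2 * p - 2 * j) : ℝ)
      = (((2*p+1).factorial : ℝ)) * F (2*j+1) := by
    intro j hj
    rw [mem_range] at hj
    have hodd1 : ¬ Even (2*j+1) := by rintro ⟨r, hr⟩; omega
    have hm : 2*p - (2*j+1) = 2*(p-j-1)+1 := by omega
    have hodd2 : ¬ Even (2*(p-j-1)+1) := by rintro ⟨r, hr⟩; omega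
    have hm1 : 2*(p-j-1)+1+1 = 2*p - 2*j := by omega
    rw [hF]
    simp only [Sps, Tps, PowerSeries.coeff_mk, hm, if_neg hodd1, if_neg hodd2, hm1]
    have hch : ((2*p+1).choose (2*j+1) : ℝ)
        = ((2*p+1).factorial : ℝ) /
          (((2*j+1).factorial : ℝ) * (((2*p+1) - (2*j+1)).factorial : ℝ)) :=
      Nat.cast_choose ℝ (by omega)
    rw [show (2*p+1) - (2*j+1) = 2*p - 2*j by omega] at hch
    have h1 : (((2*j+1).factorial : ℝ)) ≠ 0 := Nat.cast_ne_zero.mpr (Nat.factorial_ne_zero _)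
    have h2 : (((2*p - 2*j).factorial : ℝ)) ≠ 0 := Nat.cast_ne_zero.mpr (Nat.factorial_ne_zero _)
    rw [hch]
    field_simp
  rw [Finset.sum_congr rfl hterm, ← Finset.mul_sum, h2p]
  -- now compute RHS
  have hC : PowerSeries.coeff (2*p) Cps = ((2*p).factorial : ℝ)⁻¹ := by
    rw [Cps, PowerSeries.coeff_mk, if_pos ⟨p, by omega⟩]
  have hG : PowerSeries.coeff (2*p) Gps = eulerNumber (2*p) / ((2*p).factorial : ℝ) := by
    rw [Gps, PowerSeries.coeff_mk]
  rw [hC, hG]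
  have hfac : ((2*p+1).factorial : ℝ) = (2*p+1) * ((2*p).factorial : ℝ) := by
    rw [Nat.factorial_succ]; push_cast; ring
  have h2 : (((2*p).factorial : ℝ)) ≠ 0 := Nat.cast_ne_zero.mpr (Nat.factorial_ne_zero _)
  rw [hfac]
  field_simp
end

section
/- For all integers p ≥ 1, the sum over j = 0 to p-1 of binom(2p, 2j) · 2^{2p-2j} · B_{2p-2j} equals 2p - 1 + (2 - 2^{2p}) · B_{2p}, where B_n denotes the n-th Bernoulli number. -/
open PowerSeries Finset Nat

lemma rescale_ps : rescale (2:ℚ) (X : ℚ⟦X⟧) = 2 * X := by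
  have h : (2 : ℚ⟦X⟧) = C 2 := (map_ofNat C 2).symm
  rw [h]
  ext n
  rw [coeff_rescale, coeff_C_mul, coeff_X]
  split_ifs with hn <;> simp [hn]

lemma exp_sub_one_ne : (exp ℚ - 1) ≠ 0 := by
  simp only [exp, PowerSeries.ext_iff, Ne, not_forall]
  use 1
  simp [Nat.factorial_ne_zero]

lemma series_key :
    rescale (2:ℚ) (bernoulliPowerSeries ℚ) * (exp ℚ + 1) = 2 * bernoulliPowerSeries ℚ := by
  apply mul_right_cancel₀ exp_sub_one_ne
  have h2 : ((2:ℕ):ℚ) = 2 := by norm_num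
  calc rescale (2:ℚ) (bernoulliPowerSeries ℚ) * (exp ℚ + 1) * (exp ℚ - 1)
      = rescale (2:ℚ) (bernoulliPowerSeries ℚ) * (exp ℚ ^ 2 - 1) := by ring
    _ = rescale (2:ℚ) (bernoulliPowerSeries ℚ) * rescale (2:ℚ) (exp ℚ - 1) := by
        rw [exp_pow_eq_rescale_exp, h2, map_sub, map_one]
    _ = rescale (2:ℚ) (bernoulliPowerSeries ℚ * (exp ℚ - 1)) := by rw [map_mul]
    _ = 2 * X := by rw [bernoulliPowerSeries_mul_exp_sub_one, rescale_ps]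
    _ = 2 * bernoulliPowerSeries ℚ * (exp ℚ - 1) := by
        rw [mul_assoc, bernoulliPowerSeries_mul_exp_sub_one]

lemma key (n : ℕ) :
    ∑ i ∈ Finset.range (n+1), (n.choose i : ℚ) * 2^i * bernoulli i
      = (2 - 2^n) * bernoulli n := by
  have hfac : ∀ m : ℕ, (m ! : ℚ) ≠ 0 := fun m => by exact_mod_cast m.factorial_ne_zero
  have hB : ∀ i, coeff i (bernoulliPowerSeries ℚ) = bernoulli i / i ! := by
    intro i; simp [bernoulliPowerSeries]
  have h := congrArg (coeff n) series_key
  have h2C : (2 : ℚ⟦X⟧) = C 2 := (map_ofNat _ 2).symm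
  rw [mul_add, mul_one, map_add, coeff_mul, h2C, coeff_C_mul, hB, coeff_rescale, hB,
    Finset.Nat.sum_antidiagonal_eq_sum_range_succ
      (fun i j => coeff i (rescale (2:ℚ) (bernoulliPowerSeries ℚ)) * coeff j (exp ℚ))] at h
  simp only [coeff_rescale, hB, coeff_exp, Algebra.algebraMap_self, RingHom.id_apply, one_div] at h
  have key2 : ∑ i ∈ Finset.range (n+1), 2 ^ i * (bernoulli i / ↑i !) * (↑(n - i)!)⁻¹
      = 2 * (bernoulli n / ↑n !) - 2 ^ n * (bernoulli n / ↑n !) := by linarith [h]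
  calc ∑ i ∈ Finset.range (n+1), (n.choose i : ℚ) * 2^i * bernoulli i
      = ∑ i ∈ Finset.range (n+1), (n ! : ℚ) * (2 ^ i * (bernoulli i / ↑i !) * (↑(n - i)!)⁻¹) := by
        refine Finset.sum_congr rfl fun i hi => ?_
        rw [Nat.cast_choose ℚ (Finset.mem_range_succ_iff.mp hi)]
        field_simp
    _ = (n ! : ℚ) * (2 * (bernoulli n / ↑n !) - 2 ^ n * (bernoulli n / ↑n !)) := by
        rw [← Finset.mul_sum, key2]
    _ = (2 - 2^n) * bernoulli n := by field_simp

lemma even_odd_split (f : ℕ → ℚ) : ∀ n, ∑ i ∈ Finset.range (2*n+1), f i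
    = ∑ k ∈ Finset.range (n+1), f (2*k) + ∑ k ∈ Finset.range n, f (2*k+1)
  | 0 => by simp
  | n+1 => by
    have h : 2*(n+1)+1 = (2*n+1) + 1 + 1 := by ring
    have h2 : 2*n+1+1 = 2*(n+1) := by ring
    rw [h, Finset.sum_range_succ, Finset.sum_range_succ, even_odd_split f n,
      Finset.sum_range_succ (fun k => f (2*k)) (n+1),
      Finset.sum_range_succ (fun k => f (2*k+1)) n, h2]
    ring

theorem bernoulli_sum_even (p : ℕ) (hp : 1 ≤ p) :
    ∑ j ∈ Finset.range p,
      (Nat.choose (2 * p) (2 * j) : ℚ) * 2 ^ (2 * p - 2 * j) *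
        bernoulli (2 * p - 2 * j) =
      2 * p - 1 + (2 - 2 ^ (2 * p)) * bernoulli (2 * p) := by
  set f : ℕ → ℚ := fun i => ((2*p).choose i : ℚ) * 2^i * bernoulli i with hf
  have hkey : ∑ i ∈ Finset.range (2*p+1), f i = (2 - 2^(2*p)) * bernoulli (2*p) := key (2*p)
  have hodd : ∑ k ∈ Finset.range p, f (2*k+1) = -(2*p) := by
    rw [Finset.sum_eq_single 0]
    · simp [hf, bernoulli_one, Nat.choose_one_right]
      ring
    · intro k hk hk0
      have h1 : 1 < 2*k+1 := by omega
      have hz : bernoulli (2*k+1) = 0 := by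
        rw [bernoulli_eq_bernoulli'_of_ne_one (by omega)]
        simp [bernoulli'_eq_zero_of_odd ⟨k, by ring⟩ h1]
      simp [hf, hz]
    · intro h; exact absurd (Finset.mem_range.mpr hp) h
  have heven : ∑ k ∈ Finset.range (p+1), f (2*k)
      = (2 - 2^(2*p)) * bernoulli (2*p) + 2*p := by
    have := even_odd_split f p
    rw [hkey, hodd] at this
    linarith
  have hterm : ∀ j ∈ Finset.range p,
      (Nat.choose (2 * p) (2 * j) : ℚ) * 2 ^ (2 * p - 2 * j) * bernoulli (2 * p - 2 * j)
        = f (2*(p - j)) := by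
    intro j hj
    have hjp : j < p := Finset.mem_range.mp hj
    have h1 : 2*p - 2*j = 2*(p - j) := by omega
    have h2 : (2*p).choose (2*j) = (2*p).choose (2*(p-j)) := by
      rw [← Nat.choose_symm (by omega : 2*j ≤ 2*p)]
      congr 1
    rw [h1, h2, hf]
  rw [Finset.sum_congr rfl hterm]
  have hreflect : ∑ j ∈ Finset.range p, f (2*(p - j)) = ∑ j ∈ Finset.range p, f (2*(j+1)) := by
    rw [← Finset.sum_range_reflect (fun j => f (2*(j+1))) p]
    refine Finset.sum_congr rfl fun j hj => ?_
    have : p - 1 - j + 1 = p - j := by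
      have := Finset.mem_range.mp hj; omega
    rw [this]
  have hsplit : ∑ k ∈ Finset.range (p+1), f (2*k) = f 0 + ∑ j ∈ Finset.range p, f (2*(j+1)) := by
    rw [Finset.sum_range_succ' (fun k => f (2*k)) p]
    ring_nf
  have hf0 : f 0 = 1 := by simp [hf]
  rw [hreflect]
  have : f 0 + ∑ j ∈ Finset.range p, f (2*(j+1)) = (2 - 2^(2*p)) * bernoulli (2*p) + 2*p := by
    rw [← hsplit, heven]
  rw [hf0] at this
  linarith
end

section
/- For all integers p ≥ 1, the sum over j = 0 to p-1 of binom(2p, 2j) · 2^{2p-2j} · (2^{2p-2j} - 1) · B_{2p-2j} equals 2p, where B_n denotes the n-th Bernoulli number. -/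
open PowerSeries Finset
noncomputable abbrev E (c : ℚ) : ℚ⟦X⟧ := rescale c (exp ℚ)

lemma hE (a b : ℚ) : E a * E b = E (a + b) := exp_mul_exp_eq_exp_add a b

lemma hE0 : E 0 = 1 := by
  simp [E, rescale_zero]

lemma hE1 : E 1 = exp ℚ := by simp [E, rescale_one]

lemma E4ne : E 4 - 1 ≠ 0 := by
  intro h
  have := congrArg (coeff (R := ℚ) 1) h
  simp [E, coeff_rescale, coeff_exp] at this

noncomputable def g : ℚ⟦X⟧ :=
  exp ℚ * (rescale (4:ℚ) (bernoulliPowerSeries ℚ) - rescale (2:ℚ) (bernoulliPowerSeries ℚ))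

lemma g_def : g = exp ℚ *
    (rescale (4:ℚ) (bernoulliPowerSeries ℚ) - rescale (2:ℚ) (bernoulliPowerSeries ℚ)) := rfl

lemma hkey_s7 : g * (E 4 - 1) = C (R := ℚ) 2 * X * (E 1 - E 3) := by
  have hB := bernoulliPowerSeries_mul_exp_sub_one ℚ
  have h4 : rescale (4:ℚ) (bernoulliPowerSeries ℚ) * (E 4 - 1) = C (R := ℚ) 4 * X := by
    have := congrArg (rescale (4:ℚ)) hB
    simpa [map_mul, map_sub, rescale_X] using this
  have h2 : rescale (2:ℚ) (bernoulliPowerSeries ℚ) * (E 2 - 1) = C (R := ℚ) 2 * X := by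
    have := congrArg (rescale (2:ℚ)) hB
    simpa [map_mul, map_sub, rescale_X] using this
  have hsplit : E 4 - 1 = (E 2 - 1) * (E 2 + 1) := by
    have h22 : E 2 * E 2 = E 4 := by rw [hE]; norm_num
    rw [← h22]; ring
  have h13 : E 1 * E 2 = E 3 := by rw [hE]; norm_num
  rw [g_def]
  calc exp ℚ * (rescale (4:ℚ) (bernoulliPowerSeries ℚ) - rescale (2:ℚ) (bernoulliPowerSeries ℚ)) * (E 4 - 1)
      = exp ℚ * (rescale (4:ℚ) (bernoulliPowerSeries ℚ) * (E 4 - 1)) -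
        exp ℚ * (rescale (2:ℚ) (bernoulliPowerSeries ℚ) * (E 2 - 1)) * (E 2 + 1) := by
        rw [hsplit]; ring
    _ = exp ℚ * (C (R := ℚ) 4 * X) - exp ℚ * (C (R := ℚ) 2 * X) * (E 2 + 1) := by rw [h4, h2]
    _ = C (R := ℚ) 2 * X * (E 1 - E 3) := by
        rw [hE1] at *
        rw [← h13]
        have : (C (R := ℚ) 4 : ℚ⟦X⟧) = C (R := ℚ) 2 * C (R := ℚ) 2 := by rw [← map_mul]; norm_num
        rw [this]
        have h2' : (C (R := ℚ) 2 : ℚ⟦X⟧) = 1 + 1 := by rw [show (2:ℚ) = 1 + 1 by norm_num, map_add, map_one]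
        rw [h2']; ring

lemma hEneg (c : ℚ) : rescale (-1 : ℚ) (E c) = E (-c) := by
  rw [E, rescale_rescale]
  norm_num

lemma hneg : rescale (-1 : ℚ) g = -g := by
  have hC : rescale (-1 : ℚ) (C (R := ℚ) 2) = C (R := ℚ) 2 := by
    ext n; simp [coeff_rescale, coeff_C]; split <;> simp_all
  have h1 := congrArg (rescale (-1 : ℚ)) hkey_s7
  rw [show g * (E 4 - 1) = g * (E 4 - 1) from rfl] at h1
  rw [map_mul, map_sub, map_one, hEneg] at h1
  rw [map_mul, map_mul, map_sub, hEneg, hEneg, rescale_neg_one_X, hC] at h1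
  have h2 := congrArg (· * E 4) h1
  have e1 : (E (-4) - 1) * E 4 = 1 - E 4 := by
    rw [sub_mul, hE]; norm_num [hE0]
  have e2 : (C (R := ℚ) 2 * -X * (E (-1) - E (-3))) * E 4 = C (R := ℚ) 2 * X * (E 1 - E 3) := by
    have a1 : E (-1) * E 4 = E 3 := by rw [hE]; norm_num
    have a2 : E (-3) * E 4 = E 1 := by rw [hE]; norm_num
    calc (C (R := ℚ) 2 * -X * (E (-1) - E (-3))) * E 4
        = -(C (R := ℚ) 2 * X * (E (-1) * E 4 - E (-3) * E 4)) := by ring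
      _ = C (R := ℚ) 2 * X * (E 1 - E 3) := by rw [a1, a2]; ring
  rw [mul_assoc, e1, e2, ← hkey_s7] at h2
  have h3 : (rescale (-1:ℚ) g + g) * (E 4 - 1) = 0 := by
    rw [add_mul]
    have : rescale (-1:ℚ) g * (E 4 - 1) = -(rescale (-1:ℚ) g * (1 - E 4)) := by ring
    rw [this, h2]
    ring
  rcases mul_eq_zero.mp h3 with h | h
  · linear_combination h
  · exact absurd h E4ne

lemma coeff_g_even {n : ℕ} (hn : Even n) : coeff (R := ℚ) n g = 0 := by
  have h := congrArg (coeff (R := ℚ) n) hneg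
  rw [coeff_rescale, hn.neg_one_pow, one_mul, map_neg] at h
  linarith [h]

lemma aux (n : ℕ) (hn : Even n) :
    ∑ k ∈ Finset.range (n+1), (n.choose k : ℚ) * (4^(n-k) - 2^(n-k)) * bernoulli (n-k) = 0 := by
  have h := coeff_g_even hn
  rw [g_def, coeff_mul, Finset.Nat.sum_antidiagonal_eq_sum_range_succ_mk] at h
  have key : ∑ k ∈ Finset.range (n+1),
      (n.factorial : ℚ) * (coeff (R := ℚ) k (exp ℚ) * coeff (R := ℚ) (n-k)
        (rescale (4:ℚ) (bernoulliPowerSeries ℚ) - rescale (2:ℚ) (bernoulliPowerSeries ℚ))) = 0 := by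
    rw [← Finset.mul_sum, h, mul_zero]
  rw [← key]
  refine Finset.sum_congr rfl fun k hk => ?_
  have hk' : k ≤ n := Nat.lt_succ_iff.mp (Finset.mem_range.mp hk)
  rw [map_sub, coeff_rescale, coeff_rescale, coeff_exp]
  simp only [bernoulliPowerSeries, coeff_mk, Algebra.algebraMap_self, RingHom.id_apply]
  rw [Nat.cast_choose ℚ hk']
  have f1 : (k.factorial : ℚ) ≠ 0 := Nat.cast_ne_zero.mpr k.factorial_ne_zero
  have f2 : ((n-k).factorial : ℚ) ≠ 0 := Nat.cast_ne_zero.mpr (n-k).factorial_ne_zero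
  field_simp

lemma sum_range_pair (f : ℕ → ℚ) (p : ℕ) :
    ∑ k ∈ Finset.range (2*p+1), f k
      = (∑ j ∈ Finset.range p, (f (2*j) + f (2*j+1))) + f (2*p) := by
  induction p with
  | zero => simp
  | succ m ih =>
    have h1 : 2*(m+1)+1 = ((2*m+1)+1)+1 := by ring
    rw [h1, Finset.sum_range_succ, Finset.sum_range_succ, ih, Finset.sum_range_succ]
    have e1 : 2*m+1+1 = 2*(m+1) := by ring
    rw [e1]
    ring

lemma bern_odd {m : ℕ} (h : Odd m) (h3 : 1 < m) : bernoulli m = 0 := by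
  rw [bernoulli_eq_bernoulli'_of_ne_one (by omega), bernoulli'_eq_zero_of_odd h h3]

theorem bernoulli_sum_even' (p : ℕ) (hp : 1 ≤ p) :
    ∑ j ∈ Finset.range p,
      (Nat.choose (2 * p) (2 * j) : ℚ) * 2 ^ (2 * p - 2 * j) *
        (2 ^ (2 * p - 2 * j) - 1) * bernoulli (2 * p - 2 * j) = 2 * p := by
  have h0 := aux (2*p) (even_two_mul p)
  rw [sum_range_pair (fun k => ((2*p).choose k : ℚ) * (4^(2*p-k) - 2^(2*p-k)) * bernoulli (2*p-k)) p] at h0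
  have hlast : ((2*p).choose (2*p) : ℚ) * (4^(2*p-2*p) - 2^(2*p-2*p)) * bernoulli (2*p-2*p) = 0 := by
    simp
  rw [hlast, add_zero, Finset.sum_add_distrib] at h0
  have hodd : ∑ j ∈ Finset.range p,
      ((2*p).choose (2*j+1) : ℚ) * (4^(2*p-(2*j+1)) - 2^(2*p-(2*j+1))) * bernoulli (2*p-(2*j+1))
      = -(2*p) := by
    rw [Finset.sum_eq_single_of_mem (p-1) (Finset.mem_range.mpr (by omega))]
    · have e1 : 2*p - (2*(p-1)+1) = 1 := by omega
      have e2 : 2*(p-1)+1 = 2*p-1 := by omega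
      rw [e1, e2, bernoulli_one, Nat.choose_symm (by omega : 1 ≤ 2*p), Nat.choose_one_right]
      push_cast
      ring
    · intro j hj hne
      have hodd' : Odd (2*p - (2*j+1)) := by
        have hjp : j < p := Finset.mem_range.mp hj
        refine ⟨p - j - 1, by omega⟩
      have h3 : 1 < 2*p - (2*j+1) := by
        have hjp : j < p := Finset.mem_range.mp hj
        omega
      rw [bern_odd hodd' h3, mul_zero]
  rw [hodd] at h0
  have heven : ∑ j ∈ Finset.range p,
      ((2*p).choose (2*j) : ℚ) * (4^(2*p-2*j) - 2^(2*p-2*j)) * bernoulli (2*p-2*j)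
      = ∑ j ∈ Finset.range p,
      ((2 * p).choose (2 * j) : ℚ) * 2 ^ (2 * p - 2 * j) *
        (2 ^ (2 * p - 2 * j) - 1) * bernoulli (2 * p - 2 * j) := by
    refine Finset.sum_congr rfl fun j hj => ?_
    have h4 : (4:ℚ)^(2*p-2*j) = 2^(2*p-2*j) * 2^(2*p-2*j) := by
      rw [show (4:ℚ) = 2*2 by norm_num, mul_pow]
    rw [h4]; ring
  rw [heven] at h0
  linarith [h0]
end

section
/- For real s > 1, the limit as ℓ → ∞ of (1/binom(2ℓ,ℓ)) · Σ_{k=1}^{ℓ} binom(2ℓ, ℓ-k) / k^s equals ζ(s), the Riemann zeta function. -/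
open Filter Finset

lemma aux_frac_tendsto (a b : ℝ) :
    Tendsto (fun ℓ : ℕ => ((ℓ : ℝ) - a) / ((ℓ : ℝ) + b)) atTop (nhds 1) := by
  have h1 : Tendsto (fun ℓ : ℕ => (ℓ : ℝ) / ((ℓ : ℝ) + b)) atTop (nhds 1) :=
    tendsto_natCast_div_add_atTop b
  have hden : Tendsto (fun ℓ : ℕ => (ℓ : ℝ) + b) atTop atTop :=
    tendsto_atTop_add_const_right _ b tendsto_natCast_atTop_atTop
  have h2 : Tendsto (fun ℓ : ℕ => a / ((ℓ : ℝ) + b)) atTop (nhds 0) :=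
    Tendsto.div_atTop tendsto_const_nhds hden
  have := h1.sub h2
  simp only [sub_zero] at this
  convert this using 2 with ℓ
  rw [sub_div]

lemma ratio_tendsto (j : ℕ) :
    Tendsto (fun ℓ : ℕ => (Nat.choose (2 * ℓ) (ℓ - j) : ℝ) / (Nat.choose (2 * ℓ) ℓ : ℝ))
      atTop (nhds 1) := by
  induction j with
  | zero =>
      have heq : ∀ ℓ : ℕ, (1 : ℝ) = (Nat.choose (2 * ℓ) (ℓ - 0) : ℝ) / (Nat.choose (2 * ℓ) ℓ : ℝ) := by
        intro ℓ
        rw [Nat.sub_zero, div_self]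
        exact_mod_cast (Nat.choose_pos (by omega)).ne'
      exact Tendsto.congr heq tendsto_const_nhds
  | succ j ih =>
      have key := (ih.mul (aux_frac_tendsto (j : ℝ) ((j : ℝ) + 1)))
      rw [mul_one] at key
      apply Tendsto.congr' _ key
      filter_upwards [eventually_ge_atTop (j + 1)] with ℓ hℓ
      have hrec := Nat.choose_succ_right_eq (2 * ℓ) (ℓ - (j + 1))
      have h1 : ℓ - (j + 1) + 1 = ℓ - j := by omega
      have h2 : 2 * ℓ - (ℓ - (j + 1)) = ℓ + (j + 1) := by omega
      rw [h1, h2] at hrec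
      -- hrec : C(2ℓ, ℓ-j) * (ℓ - j) = C(2ℓ, ℓ-(j+1)) * (ℓ + (j+1))
      have hrecR : (Nat.choose (2 * ℓ) (ℓ - j) : ℝ) * ((ℓ : ℝ) - j) =
          (Nat.choose (2 * ℓ) (ℓ - (j + 1)) : ℝ) * ((ℓ : ℝ) + (j + 1)) := by
        have := congrArg (fun n : ℕ => (n : ℝ)) hrec
        push_cast at this
        rw [Nat.cast_sub (by omega)] at this
        push_cast at this
        linarith [this]
      have hden : ((ℓ : ℝ) + ((j : ℝ) + 1)) ≠ 0 := by positivity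
      have hC : (Nat.choose (2 * ℓ) ℓ : ℝ) ≠ 0 :=
        Nat.cast_ne_zero.2 (Nat.choose_pos (by omega)).ne'
      field_simp
      linear_combination hrecR

lemma choose_middle_le (ℓ r : ℕ) : (Nat.choose (2 * ℓ) r : ℝ) ≤ (Nat.choose (2 * ℓ) ℓ : ℝ) := by
  have := Nat.choose_le_middle r (2 * ℓ)
  rw [Nat.mul_div_cancel_left ℓ (by norm_num)] at this
  exact_mod_cast this

theorem tendsto_binom_weighted_zeta (s : ℝ) (hs : 1 < s) :
    Filter.Tendsto
      (fun ℓ : ℕ =>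
        (1 / (Nat.choose (2 * ℓ) ℓ : ℝ)) *
          ∑ k ∈ Finset.Icc 1 ℓ, (Nat.choose (2 * ℓ) (ℓ - k) : ℝ) / (k : ℝ) ^ s)
      Filter.atTop
      (nhds (∑' k : ℕ, 1 / ((k : ℝ) + 1) ^ s)) := by
  set F : ℕ → ℕ → ℝ := fun ℓ k =>
    if k < ℓ then (Nat.choose (2 * ℓ) (ℓ - (k + 1)) : ℝ) / (Nat.choose (2 * ℓ) ℓ : ℝ) /
      ((k : ℝ) + 1) ^ s else 0 with hF
  have hbound_sum : Summable (fun k : ℕ => 1 / ((k : ℝ) + 1) ^ s) := by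
    have : Summable (fun k : ℕ => 1 / ((k : ℝ)) ^ s) :=
      Real.summable_one_div_nat_rpow.2 hs
    have := (summable_nat_add_iff 1).2 this
    simpa using this
  have hpow_pos : ∀ k : ℕ, (0 : ℝ) < ((k : ℝ) + 1) ^ s := fun k =>
    Real.rpow_pos_of_pos (by positivity) s
  have hptwise : ∀ k : ℕ, Tendsto (fun ℓ => F ℓ k) atTop (nhds (1 / ((k : ℝ) + 1) ^ s)) := by
    intro k
    have := (ratio_tendsto (k + 1)).mul_const (1 / ((k : ℝ) + 1) ^ s)
    rw [one_mul] at this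
    apply Tendsto.congr' _ this
    filter_upwards [eventually_gt_atTop k] with ℓ hℓ
    simp only [hF, if_pos hℓ]
    push_cast
    ring
  have hbd : ∀ ℓ k, ‖F ℓ k‖ ≤ 1 / ((k : ℝ) + 1) ^ s := by
    intro ℓ k
    simp only [hF]
    split_ifs with h
    · have hC : (0 : ℝ) < (Nat.choose (2 * ℓ) ℓ : ℝ) := by
        exact_mod_cast Nat.choose_pos (by omega)
      rw [Real.norm_eq_abs, abs_of_nonneg (by positivity)]
      rw [div_div, div_le_div_iff₀ (mul_pos hC (hpow_pos k)) (hpow_pos k), one_mul]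
      calc (Nat.choose (2 * ℓ) (ℓ - (k + 1)) : ℝ) * ((k : ℝ) + 1) ^ s
          ≤ (Nat.choose (2 * ℓ) ℓ : ℝ) * ((k : ℝ) + 1) ^ s := by
            exact mul_le_mul_of_nonneg_right (choose_middle_le ℓ _) (hpow_pos k).le
        _ = _ := by ring
    · rw [norm_zero]
      positivity
  have main := tendsto_tsum_of_dominated_convergence hbound_sum hptwise
      (Eventually.of_forall hbd)
  apply Tendsto.congr _ main
  intro ℓ
  have hsupp : ∀ k ∉ Finset.range ℓ, F ℓ k = 0 := by
    intro k hk
    simp only [Finset.mem_range, not_lt] at hk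
    simp [hF, not_lt.2 hk]
  rw [tsum_eq_sum hsupp]
  rw [Finset.mul_sum]
  rw [show Finset.Icc 1 ℓ = Finset.Ico 1 (ℓ + 1) from by rw [Finset.Ico_add_one_right_eq_Icc],
    Finset.sum_Ico_eq_sum_range]
  simp only [Nat.add_sub_cancel]
  apply Finset.sum_congr rfl
  intro k hk
  simp only [Finset.mem_range] at hk
  simp only [hF, if_pos hk]
  push_cast
  ring
end

section
/- For real s > 1, the limit as ℓ → ∞ of (1/binom(2ℓ,ℓ)) · Σ_{k=1}^{ℓ} binom(2ℓ, ℓ-k) · (-1)^{k-1} / k^s equals (1 - 2^{1-s}) · ζ(s). -/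
open Filter

noncomputable def rr (ℓ k : ℕ) : ℝ := (Nat.choose (2 * ℓ) (ℓ - k) : ℝ) / (Nat.choose (2 * ℓ) ℓ : ℝ)

lemma choose_mid_pos (ℓ : ℕ) : 0 < (Nat.choose (2 * ℓ) ℓ : ℝ) := by
  exact_mod_cast Nat.choose_pos (by omega)

lemma rr_le_one (ℓ k : ℕ) : rr ℓ k ≤ 1 := by
  rw [rr, div_le_one (choose_mid_pos ℓ)]
  exact_mod_cast (Nat.choose_le_middle (ℓ - k) (2 * ℓ)).trans_eq (by
    congr 1; omega)

lemma rr_nonneg (ℓ k : ℕ) : 0 ≤ rr ℓ k := by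
  apply div_nonneg <;> positivity

lemma rr_succ (ℓ k : ℕ) (h : k + 1 ≤ ℓ) :
    rr ℓ (k + 1) = rr ℓ k * (((ℓ : ℝ) - k) / ((ℓ : ℝ) + (k + 1))) := by
  have key : Nat.choose (2 * ℓ) (ℓ - k) * (ℓ - k) = Nat.choose (2 * ℓ) (ℓ - (k+1)) * (ℓ + (k+1)) := by
    have := Nat.choose_succ_right_eq (2 * ℓ) (ℓ - (k+1))
    have h2 : ℓ - (k+1) + 1 = ℓ - k := by omega
    rw [h2] at this
    rw [this]; congr 1; omega
  have keyR : (Nat.choose (2 * ℓ) (ℓ - k) : ℝ) * ((ℓ : ℝ) - k)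
      = (Nat.choose (2 * ℓ) (ℓ - (k+1)) : ℝ) * ((ℓ : ℝ) + (k+1)) := by
    have := congrArg (fun n : ℕ => (n : ℝ)) key
    push_cast [Nat.cast_sub (by omega : k ≤ ℓ)] at this
    convert this using 2 <;> push_cast <;> ring
  have hd : (ℓ : ℝ) + (k+1) ≠ 0 := by positivity
  rw [rr, rr]
  rw [div_mul_div_comm, div_eq_div_iff (choose_mid_pos ℓ).ne' (mul_pos (choose_mid_pos ℓ) (by positivity : (0:ℝ) < (ℓ:ℝ) + (k+1))).ne']
  linear_combination ((Nat.choose (2 * ℓ) ℓ : ℝ)) * keyR.symm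


lemma rr_tendsto (k : ℕ) : Tendsto (fun ℓ => rr ℓ k) atTop (nhds 1) := by
  induction k with
  | zero =>
    have : ∀ ℓ : ℕ, rr ℓ 0 = 1 := fun ℓ => by
      rw [rr]; simp; exact (Nat.choose_pos (by omega)).ne'
    simpa [this] using tendsto_const_nhds
  | succ k ih =>
    have hq : Tendsto (fun ℓ : ℕ => ((ℓ : ℝ) - k) / ((ℓ : ℝ) + (k + 1))) atTop (nhds 1) := by
      have h1 : Tendsto (fun ℓ : ℕ => ((ℓ : ℝ) + (k + 1))) atTop atTop :=
        tendsto_atTop_add_const_right _ _ tendsto_natCast_atTop_atTop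
      have h0 : Tendsto (fun ℓ : ℕ => ((2 * k + 1 : ℝ)) / ((ℓ : ℝ) + (k + 1))) atTop (nhds 0) :=
        h1.const_div_atTop _
      have := (tendsto_const_nhds (x := (1:ℝ))).sub h0
      rw [sub_zero] at this
      refine this.congr fun ℓ => ?_
      have hd : (ℓ : ℝ) + (k + 1) ≠ 0 := by positivity
      field_simp
      ring
    have := ih.mul hq
    rw [one_mul] at this
    refine Tendsto.congr' ?_ this
    filter_upwards [eventually_ge_atTop (k + 1)] with ℓ hℓ
    exact (rr_succ ℓ k hℓ).symm

lemma hZ (s : ℝ) (hs : 1 < s) : Summable (fun k : ℕ => 1 / ((k : ℝ) + 1) ^ s) := by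
  have := (Real.summable_one_div_nat_rpow (p := s)).2 hs
  have := (summable_nat_add_iff 1).2 this
  refine this.congr fun k => ?_
  push_cast
  ring_nf

lemma eta_eq (s : ℝ) (hs : 1 < s) :
    ∑' k : ℕ, (-1 : ℝ) ^ k / ((k : ℝ) + 1) ^ s
      = (1 - 2 ^ (1 - s)) * ∑' k : ℕ, 1 / ((k : ℝ) + 1) ^ s := by
  set h : ℕ → ℝ := fun k => 1 / ((k : ℝ) + 1) ^ s with hh
  set g : ℕ → ℝ := fun k => (-1 : ℝ) ^ k / ((k : ℝ) + 1) ^ s with hg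
  have hsumh : Summable h := hZ s hs
  have he : Summable (fun k => h (2 * k)) :=
    hsumh.comp_injective (fun a b hab => by omega)
  have ho : Summable (fun k => h (2 * k + 1)) :=
    hsumh.comp_injective (fun a b hab => by omega)
  have hge : ∀ k, g (2 * k) = h (2 * k) := fun k => by
    simp [hg, hh, pow_mul]
  have hgo : ∀ k, g (2 * k + 1) = -h (2 * k + 1) := fun k => by
    simp [hg, hh, pow_succ, pow_mul, neg_div]
  have hoe : ∀ k, h (2 * k + 1) = 2 ^ (-s) * h k := fun k => by
    have h2 : ((2 * k + 1 : ℕ) : ℝ) + 1 = 2 * ((k : ℝ) + 1) := by push_cast; ring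
    have hp : (0:ℝ) ≤ 2 := by norm_num
    simp only [hh, h2, Real.mul_rpow hp (by positivity : (0:ℝ) ≤ (k:ℝ)+1), Real.rpow_neg hp]
    rw [one_div, one_div, mul_inv]
  have hEg : Summable (fun k => g (2 * k)) := he.congr fun k => (hge k).symm
  have hOg : Summable (fun k => g (2 * k + 1)) := (ho.neg).congr fun k => (hgo k).symm
  have key1 : (∑' k, g (2 * k)) + ∑' k, g (2 * k + 1) = ∑' k, g k :=
    tsum_even_add_odd hEg hOg
  have key2 : (∑' k, h (2 * k)) + ∑' k, h (2 * k + 1) = ∑' k, h k :=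
    tsum_even_add_odd he ho
  have hOval : (∑' k, h (2 * k + 1)) = 2 ^ (-s) * ∑' k, h k := by
    rw [tsum_congr hoe, tsum_mul_left]
  have hgE : (∑' k, g (2 * k)) = ∑' k, h (2 * k) := tsum_congr hge
  have hgO : (∑' k, g (2 * k + 1)) = -∑' k, h (2 * k + 1) := by
    rw [tsum_congr hgo, tsum_neg]
  have h2s : (2:ℝ) * 2 ^ (-s) = 2 ^ (1 - s) := by
    rw [show (1:ℝ) - s = 1 + (-s) by ring, Real.rpow_add (by norm_num), Real.rpow_one]
  rw [← key1, hgE, hgO, hOval]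
  have : (∑' k, h (2 * k)) = ∑' k, h k - 2 ^ (-s) * ∑' k, h k := by
    rw [← hOval]; linarith [key2]
  rw [this]
  linear_combination (-(∑' k, h k)) * h2s

theorem tendsto_binom_weighted_eta (s : ℝ) (hs : 1 < s) :
    Filter.Tendsto
      (fun ℓ : ℕ =>
        (1 / (Nat.choose (2 * ℓ) ℓ : ℝ)) *
          ∑ k ∈ Finset.Icc 1 ℓ,
            (Nat.choose (2 * ℓ) (ℓ - k) : ℝ) * (-1) ^ (k - 1) / (k : ℝ) ^ s)
      Filter.atTop
      (nhds ((1 - 2 ^ (1 - s)) * ∑' k : ℕ, 1 / ((k : ℝ) + 1) ^ s)) := by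
  set F : ℕ → ℕ → ℝ := fun ℓ k =>
    (if k + 1 ≤ ℓ then rr ℓ (k + 1) else 0) * ((-1 : ℝ) ^ k / ((k : ℝ) + 1) ^ s) with hF
  have hrw : ∀ ℓ : ℕ,
      (1 / (Nat.choose (2 * ℓ) ℓ : ℝ)) *
        ∑ k ∈ Finset.Icc 1 ℓ,
          (Nat.choose (2 * ℓ) (ℓ - k) : ℝ) * (-1) ^ (k - 1) / (k : ℝ) ^ s
        = ∑' k : ℕ, F ℓ k := by
    intro ℓ
    rw [tsum_eq_sum (s := Finset.range ℓ) (f := F ℓ) (fun k hk => by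
      simp only [Finset.mem_range, not_lt] at hk
      have hnot : ¬ (k + 1 ≤ ℓ) := by omega
      simp only [hF, if_neg hnot, zero_mul])]
    rw [← Finset.Ico_add_one_right_eq_Icc, Finset.sum_Ico_eq_sum_range]
    simp only [Nat.succ_sub_one, Nat.add_sub_cancel]
    rw [Finset.mul_sum]
    apply Finset.sum_congr rfl
    intro i hi
    simp only [Finset.mem_range] at hi
    have h1 : (1 + i) - 1 = i := by omega
    rw [h1]
    simp only [hF]
    rw [if_pos (by omega : i + 1 ≤ ℓ), rr]
    have hc : ((1 + i : ℕ) : ℝ) = (i : ℝ) + 1 := by push_cast; ring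
    rw [hc]
    have h2 : ℓ - (1 + i) = ℓ - (i + 1) := by omega
    rw [h2]
    ring
  simp only [funext hrw]
  rw [← eta_eq s hs]
  apply tendsto_tsum_of_dominated_convergence (bound := fun k : ℕ => 1 / ((k : ℝ) + 1) ^ s)
    (hZ s hs)
  · intro k
    have := (rr_tendsto (k + 1)).mul_const ((-1 : ℝ) ^ k / ((k : ℝ) + 1) ^ s)
    rw [one_mul] at this
    refine Filter.Tendsto.congr' ?_ this
    filter_upwards [Filter.eventually_ge_atTop (k + 1)] with ℓ hℓ
    simp only [hF, if_pos hℓ]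
  · filter_upwards with ℓ k
    rw [hF]
    rw [norm_mul]
    have h1 : ‖(if k + 1 ≤ ℓ then rr ℓ (k + 1) else 0)‖ ≤ 1 := by
      split
      · rw [Real.norm_eq_abs, abs_of_nonneg (rr_nonneg ℓ (k+1))]
        exact rr_le_one ℓ (k+1)
      · simp
    have h2 : ‖(-1 : ℝ) ^ k / ((k : ℝ) + 1) ^ s‖ = 1 / ((k : ℝ) + 1) ^ s := by
      rw [norm_div, norm_pow, norm_neg, norm_one, one_pow, Real.norm_eq_abs,
        abs_of_pos (by positivity)]
    rw [h2]
    calc _ ≤ 1 * (1 / ((k : ℝ) + 1) ^ s) := by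
          apply mul_le_mul_of_nonneg_right h1 (by positivity)
      _ = _ := one_mul _
end

section
/- For real s > 1, the limit as ℓ → ∞ of (1/binom(2ℓ+1, ℓ+1)) · Σ_{k=0}^{ℓ} binom(2ℓ+1, ℓ-k) / (2k+1)^s equals (1 - 2^{-s}) · ζ(s). -/
open Filter

lemma choose_half_eq (ℓ : ℕ) : Nat.choose (2*ℓ+1) (ℓ+1) = Nat.choose (2*ℓ+1) ℓ := by
  have := Nat.choose_symm (n := 2*ℓ+1) (k := ℓ+1) (by omega)
  have h4 : 2*ℓ+1-(ℓ+1) = ℓ := by omega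
  rw [h4] at this
  exact this.symm

lemma aux_choose (ℓ : ℕ) : ∀ k, k ≤ ℓ →
    Nat.choose (2*ℓ+1) (ℓ+1) * (ℓ-k)^k ≤ Nat.choose (2*ℓ+1) (ℓ-k) * (ℓ+k+2)^k := by
  intro k
  induction k with
  | zero => simp [choose_half_eq ℓ]
  | succ k ih =>
    intro hk
    have hk' : k ≤ ℓ := by omega
    have ih' := ih hk'
    have hrel : Nat.choose (2*ℓ+1) (ℓ-k) * (ℓ-k) = Nat.choose (2*ℓ+1) (ℓ-(k+1)) * (ℓ+k+2) := by
      have := Nat.choose_succ_right_eq (2*ℓ+1) (ℓ-(k+1))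
      have h1 : ℓ - (k+1) + 1 = ℓ - k := by omega
      have h2 : 2*ℓ+1 - (ℓ-(k+1)) = ℓ+k+2 := by omega
      rw [h1, h2] at this
      omega
    calc Nat.choose (2*ℓ+1) (ℓ+1) * (ℓ-(k+1))^(k+1)
        = Nat.choose (2*ℓ+1) (ℓ+1) * (ℓ-(k+1))^k * (ℓ-(k+1)) := by ring
      _ ≤ Nat.choose (2*ℓ+1) (ℓ+1) * (ℓ-k)^k * (ℓ-(k+1)) := by
          gcongr <;> omega
      _ ≤ Nat.choose (2*ℓ+1) (ℓ-k) * (ℓ+k+2)^k * (ℓ-(k+1)) := by gcongr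
      _ ≤ Nat.choose (2*ℓ+1) (ℓ-k) * (ℓ+(k+1)+2)^k * (ℓ-k) := by gcongr <;> omega
      _ = Nat.choose (2*ℓ+1) (ℓ-k) * (ℓ-k) * (ℓ+(k+1)+2)^k := by ring
      _ = Nat.choose (2*ℓ+1) (ℓ-(k+1)) * (ℓ+k+2) * (ℓ+(k+1)+2)^k := by rw [hrel]
      _ ≤ Nat.choose (2*ℓ+1) (ℓ-(k+1)) * (ℓ+(k+1)+2) * (ℓ+(k+1)+2)^k := by gcongr <;> omega
      _ = Nat.choose (2*ℓ+1) (ℓ-(k+1)) * (ℓ+(k+1)+2)^(k+1) := by ring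

lemma aux_choose_le (ℓ k : ℕ) :
    Nat.choose (2*ℓ+1) (ℓ-k) ≤ Nat.choose (2*ℓ+1) (ℓ+1) := by
  have h1 : Nat.choose (2*ℓ+1) (ℓ-k) ≤ Nat.choose (2*ℓ+1) ((2*ℓ+1)/2) :=
    Nat.choose_le_middle _ _
  have h2 : (2*ℓ+1)/2 = ℓ := by omega
  rw [h2] at h1
  rw [choose_half_eq ℓ]
  exact h1

lemma summable_bound (s : ℝ) (hs : 1 < s) :
    Summable (fun k : ℕ => 1 / (2 * (k:ℝ) + 1) ^ s) := by
  have h := (Real.summable_one_div_nat_rpow (p := s)).2 hs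
  have h2 : Summable (fun k : ℕ => 1 / ((k:ℝ)+1) ^ s) := by
    have := (summable_nat_add_iff 1).2 h
    simpa using this
  apply h2.of_nonneg_of_le
  · intro k; positivity
  · intro k
    apply one_div_le_one_div_of_le
    · positivity
    · apply Real.rpow_le_rpow (by positivity) (by linarith [Nat.cast_nonneg (α := ℝ) k]) (by linarith)

lemma tsum_odd (s : ℝ) (hs : 1 < s) :
    ∑' k : ℕ, 1 / (2 * (k:ℝ) + 1) ^ s
      = (1 - 2 ^ (-s)) * ∑' k : ℕ, 1 / ((k:ℝ) + 1) ^ s := by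
  have hsum : Summable (fun n : ℕ => 1 / (n:ℝ) ^ s) :=
    (Real.summable_one_div_nat_rpow (p := s)).2 hs
  have hodd : Summable (fun k : ℕ => 1 / (2 * (k:ℝ) + 1) ^ s) := summable_bound s hs
  have hoddcast : ∀ k : ℕ, 1 / (((2*k+1 : ℕ)):ℝ) ^ s = 1 / (2*(k:ℝ)+1) ^ s := by
    intro k; push_cast; ring_nf
  have heven : Summable (fun k : ℕ => 1 / ((2*k : ℕ):ℝ) ^ s) := by
    apply hsum.comp_injective
    intro a b; omega
  have hodd' : Summable (fun k : ℕ => 1 / (((2*k+1 : ℕ)):ℝ) ^ s) := by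
    apply hodd.congr
    intro k; exact (hoddcast k).symm
  have hT : ∑' n : ℕ, 1 / (n:ℝ) ^ s = ∑' k : ℕ, 1 / ((k:ℝ)+1) ^ s := by
    rw [Summable.tsum_eq_zero_add hsum]
    simp [Real.zero_rpow (by linarith : s ≠ 0)]
  have hsplit := tsum_even_add_odd (f := fun n : ℕ => 1 / (n:ℝ) ^ s) heven hodd'
  have heq : ∀ k : ℕ, 1 / ((2*k : ℕ):ℝ) ^ s = 2 ^ (-s) * (1 / (k:ℝ) ^ s) := by
    intro k
    push_cast
    rw [Real.mul_rpow (by norm_num) (Nat.cast_nonneg k), Real.rpow_neg (by norm_num)]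
    field_simp
  have heven_eq : ∑' k : ℕ, 1 / ((2*k : ℕ):ℝ) ^ s = 2 ^ (-s) * ∑' n : ℕ, 1 / (n:ℝ) ^ s := by
    rw [← tsum_mul_left]
    exact tsum_congr heq
  have hodd_eq : ∑' k : ℕ, 1 / (((2*k+1 : ℕ)):ℝ) ^ s = ∑' k : ℕ, 1 / (2*(k:ℝ)+1) ^ s :=
    tsum_congr hoddcast
  rw [heven_eq, hodd_eq] at hsplit
  rw [← hT]
  linarith [hsplit]

theorem tendsto_binom_weighted_odd_zeta (s : ℝ) (hs : 1 < s) :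
    Filter.Tendsto
      (fun ℓ : ℕ =>
        (1 / (Nat.choose (2 * ℓ + 1) (ℓ + 1) : ℝ)) *
          ∑ k ∈ Finset.range (ℓ + 1),
            (Nat.choose (2 * ℓ + 1) (ℓ - k) : ℝ) / (2 * (k : ℝ) + 1) ^ s)
      Filter.atTop
      (nhds ((1 - 2 ^ (-s)) * ∑' k : ℕ, 1 / ((k : ℝ) + 1) ^ s)) := by
  rw [← tsum_odd s hs]
  set F : ℕ → ℕ → ℝ := fun ℓ k =>
    if k ≤ ℓ then
      ((Nat.choose (2*ℓ+1) (ℓ-k) : ℝ) / (Nat.choose (2*ℓ+1) (ℓ+1) : ℝ)) *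
        (1 / (2 * (k:ℝ) + 1) ^ s)
    else 0 with hF
  have hCpos : ∀ ℓ : ℕ, (0:ℝ) < (Nat.choose (2*ℓ+1) (ℓ+1) : ℝ) := by
    intro ℓ
    exact_mod_cast Nat.choose_pos (by omega)
  have hbpos : ∀ k : ℕ, (0:ℝ) < 1 / (2 * (k:ℝ) + 1) ^ s := by
    intro k
    have : (0:ℝ) < 2 * (k:ℝ) + 1 := by positivity
    positivity
  have hkey : (fun ℓ : ℕ =>
        (1 / (Nat.choose (2 * ℓ + 1) (ℓ + 1) : ℝ)) *
          ∑ k ∈ Finset.range (ℓ + 1),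
            (Nat.choose (2 * ℓ + 1) (ℓ - k) : ℝ) / (2 * (k : ℝ) + 1) ^ s)
      = fun ℓ => ∑' k, F ℓ k := by
    funext ℓ
    rw [tsum_eq_sum (s := Finset.range (ℓ+1)) (f := F ℓ) ?_]
    · rw [Finset.mul_sum]
      apply Finset.sum_congr rfl
      intro k hk
      rw [Finset.mem_range] at hk
      rw [hF]
      simp only [if_pos (by omega : k ≤ ℓ)]
      field_simp
    · intro k hk
      rw [Finset.mem_range] at hk
      rw [hF]
      simp only [if_neg (by omega : ¬ k ≤ ℓ)]
  rw [hkey]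
  apply tendsto_tsum_of_dominated_convergence
    (bound := fun k : ℕ => 1 / (2 * (k:ℝ) + 1) ^ s) (summable_bound s hs)
  · -- pointwise limit
    intro k
    have hlow : Filter.Tendsto
        (fun ℓ : ℕ => (((ℓ:ℝ) - k) / ((ℓ:ℝ) + k + 2))^k * (1 / (2 * (k:ℝ) + 1) ^ s))
        atTop (nhds (1 / (2 * (k:ℝ) + 1) ^ s)) := by
      have h1 : Filter.Tendsto (fun ℓ : ℕ => ((ℓ:ℝ) - k) / ((ℓ:ℝ) + k + 2)) atTop (nhds 1) := by
        have h2 : Filter.Tendsto (fun ℓ : ℕ => (2*(k:ℝ)+2) / ((ℓ:ℝ) + k + 2)) atTop (nhds 0) := by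
          apply Filter.Tendsto.div_atTop (tendsto_const_nhds)
          apply Filter.tendsto_atTop_add_const_right
          apply Filter.tendsto_atTop_add_const_right
          exact tendsto_natCast_atTop_atTop
        have := (tendsto_const_nhds (x := (1:ℝ)) (f := atTop (α := ℕ))).sub h2
        rw [sub_zero] at this
        apply this.congr
        intro ℓ
        have hd : (ℓ:ℝ) + k + 2 ≠ 0 := by positivity
        field_simp
        ring
      have := (h1.pow k).mul_const (1 / (2 * (k:ℝ) + 1) ^ s)
      rwa [one_pow, one_mul] at this
    apply tendsto_of_tendsto_of_tendsto_of_le_of_le' hlow tendsto_const_nhds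
    · -- lower bound eventually
      filter_upwards [eventually_ge_atTop k] with ℓ hℓ
      rw [hF]
      simp only [if_pos hℓ]
      have hcast : ((ℓ:ℝ) - k) = ((ℓ - k : ℕ) : ℝ) := by
        rw [Nat.cast_sub hℓ]
      gcongr
      rw [hcast, div_pow]
      rw [div_le_div_iff₀ (by positivity) (hCpos ℓ)]
      have h := aux_choose ℓ k hℓ
      have hcast2 : (((ℓ:ℝ) + k + 2)) = ((ℓ + k + 2 : ℕ) : ℝ) := by push_cast; ring
      rw [hcast2]
      calc ((ℓ - k : ℕ) : ℝ)^k * (Nat.choose (2*ℓ+1) (ℓ+1) : ℝ)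
          = ((Nat.choose (2*ℓ+1) (ℓ+1) * (ℓ-k)^k : ℕ) : ℝ) := by push_cast; ring
        _ ≤ ((Nat.choose (2*ℓ+1) (ℓ-k) * (ℓ+k+2)^k : ℕ) : ℝ) := by exact_mod_cast h
        _ = (Nat.choose (2*ℓ+1) (ℓ-k) : ℝ) * ((ℓ+k+2:ℕ):ℝ)^k := by push_cast; ring
    · -- upper bound eventually
      filter_upwards with ℓ
      rw [hF]
      by_cases hℓ : k ≤ ℓ
      · simp only [if_pos hℓ]
        have hw : (Nat.choose (2*ℓ+1) (ℓ-k) : ℝ) / (Nat.choose (2*ℓ+1) (ℓ+1) : ℝ) ≤ 1 := by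
          rw [div_le_one (hCpos ℓ)]
          exact_mod_cast aux_choose_le ℓ k
        calc (Nat.choose (2*ℓ+1) (ℓ-k) : ℝ) / (Nat.choose (2*ℓ+1) (ℓ+1) : ℝ) *
              (1 / (2 * (k:ℝ) + 1) ^ s) ≤ 1 * (1 / (2 * (k:ℝ) + 1) ^ s) := by
              apply mul_le_mul_of_nonneg_right hw (le_of_lt (hbpos k))
          _ = 1 / (2 * (k:ℝ) + 1) ^ s := one_mul _
      · simp only [if_neg hℓ]
        exact le_of_lt (hbpos k)
  · -- norm bound
    filter_upwards with ℓ
    intro k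
    rw [hF]
    by_cases hℓ : k ≤ ℓ
    · simp only [if_pos hℓ]
      rw [Real.norm_eq_abs, abs_of_nonneg (by positivity)]
      have hw : (Nat.choose (2*ℓ+1) (ℓ-k) : ℝ) / (Nat.choose (2*ℓ+1) (ℓ+1) : ℝ) ≤ 1 := by
        rw [div_le_one (hCpos ℓ)]
        exact_mod_cast aux_choose_le ℓ k
      calc (Nat.choose (2*ℓ+1) (ℓ-k) : ℝ) / (Nat.choose (2*ℓ+1) (ℓ+1) : ℝ) *
            (1 / (2 * (k:ℝ) + 1) ^ s) ≤ 1 * (1 / (2 * (k:ℝ) + 1) ^ s) := by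
            apply mul_le_mul_of_nonneg_right hw (le_of_lt (hbpos k))
        _ = 1 / (2 * (k:ℝ) + 1) ^ s := one_mul _
    · simp only [if_neg hℓ]
      simp [le_of_lt (hbpos k)]
      positivity
end

section
/- For real s > 1, the limit as ℓ → ∞ of (1/binom(2ℓ+1, ℓ+1)) · Σ_{k=0}^{ℓ} binom(2ℓ+1, ℓ-k) · (-1)^k / (2k+1)^s equals β(s), the Dirichlet beta function. -/
open Filter Finset

lemma weight_eq (ℓ k : ℕ) (hk : k ≤ ℓ) :
    ((Nat.choose (2 * ℓ + 1) (ℓ - k) : ℝ) / (Nat.choose (2 * ℓ + 1) (ℓ + 1) : ℝ)) =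
      ∏ i ∈ range k, ((ℓ : ℝ) - i) / ((ℓ : ℝ) + 2 + i) := by
  have hC : (Nat.choose (2*ℓ+1) (ℓ+1) : ℝ) ≠ 0 := by
    exact_mod_cast (Nat.choose_pos (by omega)).ne'
  induction k with
  | zero =>
    simp only [Nat.sub_zero, range_zero, prod_empty]
    have hsym : Nat.choose (2*ℓ+1) (ℓ+1) = Nat.choose (2*ℓ+1) ℓ := by
      have h1 : 2*ℓ+1 - (ℓ+1) = ℓ := by omega
      rw [← Nat.choose_symm (by omega : ℓ+1 ≤ 2*ℓ+1), h1]
    rw [hsym, div_self]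
    exact_mod_cast (Nat.choose_pos (by omega)).ne'
  | succ k ih =>
    have hk' : k ≤ ℓ := by omega
    have key : (Nat.choose (2*ℓ+1) (ℓ-k) : ℝ) * ((ℓ:ℝ) - k) =
        (Nat.choose (2*ℓ+1) (ℓ-(k+1)) : ℝ) * ((ℓ:ℝ) + 2 + k) := by
      have h := Nat.choose_succ_right_eq (2*ℓ+1) (ℓ - (k+1))
      have h2 : ℓ - (k+1) + 1 = ℓ - k := by omega
      have h3 : 2*ℓ+1 - (ℓ - (k+1)) = ℓ + 2 + k := by omega
      rw [h2, h3] at h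
      have h5 := congrArg (fun n : ℕ => (n : ℝ)) h
      simp only [Nat.cast_mul, Nat.cast_sub hk', Nat.cast_add, Nat.cast_ofNat] at h5
      linarith [h5]
    rw [prod_range_succ, ← ih hk']
    have hd : ((ℓ:ℝ) + 2 + k) ≠ 0 := by positivity
    field_simp
    linear_combination (-1 : ℝ) * key

lemma weight_tendsto (k : ℕ) :
    Tendsto (fun ℓ : ℕ => ∏ i ∈ range k, ((ℓ : ℝ) - i) / ((ℓ : ℝ) + 2 + i))
      atTop (nhds 1) := by
  have : (1 : ℝ) = ∏ i ∈ range k, 1 := by simp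
  rw [this]
  apply tendsto_finset_prod
  intro i _
  have hfac : ∀ ℓ : ℕ, ((ℓ : ℝ) - i) / ((ℓ : ℝ) + 2 + i)
      = 1 - (2 * i + 2) / ((ℓ : ℝ) + 2 + i) := by
    intro ℓ
    have hd : ((ℓ:ℝ) + 2 + i) ≠ 0 := by positivity
    field_simp
    ring
  simp_rw [hfac]
  have h1 : Tendsto (fun ℓ : ℕ => (2 * (i:ℝ) + 2) / (((ℓ + (2 + i) : ℕ)) : ℝ)) atTop (nhds 0) :=
    (tendsto_const_div_atTop_nhds_zero_nat _).comp (tendsto_add_atTop_nat (2 + i))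
  have h0 : Tendsto (fun ℓ : ℕ => (2 * (i:ℝ) + 2) / ((ℓ : ℝ) + 2 + i)) atTop (nhds 0) := by
    refine h1.congr fun ℓ => ?_
    push_cast
    ring_nf
  have := h0.const_sub 1
  simpa using this

theorem tendsto_binom_weighted_beta (s : ℝ) (hs : 1 < s) :
    Filter.Tendsto
      (fun ℓ : ℕ =>
        (1 / (Nat.choose (2 * ℓ + 1) (ℓ + 1) : ℝ)) *
          ∑ k ∈ Finset.range (ℓ + 1),
            (Nat.choose (2 * ℓ + 1) (ℓ - k) : ℝ) * (-1) ^ k / (2 * (k : ℝ) + 1) ^ s)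
      Filter.atTop
      (nhds (∑' k : ℕ, (-1) ^ k / (2 * (k : ℝ) + 1) ^ s)) := by
  set a : ℕ → ℝ := fun k => (-1) ^ k / (2 * (k : ℝ) + 1) ^ s with ha
  set f : ℕ → ℕ → ℝ := fun ℓ k =>
    if k ≤ ℓ then
      ((Nat.choose (2 * ℓ + 1) (ℓ - k) : ℝ) / (Nat.choose (2 * ℓ + 1) (ℓ + 1) : ℝ)) * a k
    else 0 with hf
  -- the bound
  set bound : ℕ → ℝ := fun k => 1 / (2 * (k : ℝ) + 1) ^ s with hb
  have hbpos : ∀ k : ℕ, (0:ℝ) < (2 * (k : ℝ) + 1) ^ s := fun k =>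
    Real.rpow_pos_of_pos (by positivity) s
  have h_sum : Summable bound := by
    have h1 : Summable (fun k : ℕ => 1 / (((k + 1 : ℕ)) : ℝ) ^ s) := by
      exact (summable_nat_add_iff 1).mpr (Real.summable_one_div_nat_rpow.mpr hs)
    apply Summable.of_nonneg_of_le (fun k => by positivity) _ h1
    intro k
    rw [hb]
    apply one_div_le_one_div_of_le (Real.rpow_pos_of_pos (by positivity) s)
    apply Real.rpow_le_rpow (by positivity) _ (le_of_lt (lt_trans one_pos hs))
    push_cast; linarith
  -- norm of a
  have hna : ∀ k : ℕ, ‖a k‖ = bound k := by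
    intro k
    rw [ha, hb]
    simp only [norm_div, norm_pow, norm_neg, norm_one, one_pow]
    rw [Real.norm_eq_abs, abs_of_pos (hbpos k)]
  -- weight in [0,1]
  have hw01 : ∀ ℓ k : ℕ, k ≤ ℓ →
      ((Nat.choose (2 * ℓ + 1) (ℓ - k) : ℝ) / (Nat.choose (2 * ℓ + 1) (ℓ + 1) : ℝ)) ∈
        Set.Icc (0:ℝ) 1 := by
    intro ℓ k hk
    have hCpos : (0:ℝ) < (Nat.choose (2*ℓ+1) (ℓ+1) : ℝ) := by
      exact_mod_cast Nat.choose_pos (by omega)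
    constructor
    · positivity
    · rw [div_le_one hCpos]
      have h1 := Nat.choose_le_middle (ℓ - k) (2 * ℓ + 1)
      have h2 : (2 * ℓ + 1) / 2 = ℓ := by omega
      rw [h2] at h1
      have hsym : Nat.choose (2*ℓ+1) ℓ = Nat.choose (2*ℓ+1) (ℓ+1) := by
        have h3 : 2*ℓ+1 - (ℓ+1) = ℓ := by omega
        rw [← Nat.choose_symm (by omega : ℓ+1 ≤ 2*ℓ+1), h3]
      rw [hsym] at h1
      exact_mod_cast h1
  -- dominated convergence
  have h_bound : ∀ ℓ : ℕ, ∀ k : ℕ, ‖f ℓ k‖ ≤ bound k := by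
    intro ℓ k
    rw [hf]
    by_cases hk : k ≤ ℓ
    · simp only [if_pos hk, norm_mul, hna k]
      obtain ⟨hw0, hw1⟩ := hw01 ℓ k hk
      calc ‖(Nat.choose (2*ℓ+1) (ℓ-k) : ℝ) / (Nat.choose (2*ℓ+1) (ℓ+1) : ℝ)‖ * bound k
          ≤ 1 * bound k := by
            apply mul_le_mul_of_nonneg_right _ (by positivity)
            rwa [Real.norm_eq_abs, abs_of_nonneg hw0]
        _ = bound k := one_mul _
    · simp only [if_neg hk, norm_zero]; positivity
  have hab : ∀ k : ℕ, Tendsto (fun ℓ => f ℓ k) atTop (nhds (a k)) := by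
    intro k
    have heq : (fun ℓ : ℕ => (∏ i ∈ range k, ((ℓ : ℝ) - i) / ((ℓ : ℝ) + 2 + i)) * a k)
        =ᶠ[atTop] (fun ℓ => f ℓ k) := by
      filter_upwards [eventually_ge_atTop k] with ℓ hℓ
      rw [hf]
      simp only [if_pos hℓ, weight_eq ℓ k hℓ]
    refine Tendsto.congr' heq ?_
    have h := (weight_tendsto k).mul_const (a k)
    rwa [one_mul] at h
  have main := tendsto_tsum_of_dominated_convergence h_sum hab
    (Filter.Eventually.of_forall h_bound)
  -- identify the function
  refine main.congr fun ℓ => ?_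
  rw [tsum_eq_sum (s := Finset.range (ℓ + 1))
    (fun k hk => by
      rw [hf]; simp only [Finset.mem_range, not_lt] at hk
      exact if_neg (by omega))]
  rw [Finset.mul_sum]
  refine Finset.sum_congr rfl fun k hk => ?_
  rw [Finset.mem_range] at hk
  rw [hf]
  simp only [if_pos (by omega : k ≤ ℓ)]
  rw [ha]
  ring
end

section
/- For every integer ℓ ≥ 1, 4 · Σ_{k=0}^{⌊(ℓ-1)/2⌋} binom(2ℓ, ℓ-2k-1) / (2k+1)^2 = binom(2ℓ, ℓ) · Σ_{j=1}^{ℓ} 4^j / (binom(2j, j) · j^2). -/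
open Finset

/-- Partial alternating sum of a binomial row. -/
lemma alt_partial (N : ℕ) : ∀ m : ℕ,
    ∑ j ∈ Finset.range (m + 1), (-1 : ℤ) ^ j * ((N + 1).choose j) = (-1) ^ m * (N.choose m) := by
  intro m
  induction m with
  | zero => simp
  | succ m ih =>
      rw [Finset.sum_range_succ, ih, Nat.choose_succ_succ (N) (m)]
      push_cast
      ring

/-- Sum of the first half (up to `n`) of row `2n+2`. -/
lemma halfRow (n : ℕ) :
    ∑ j ∈ Finset.range (n + 1), ((2 * n + 2).choose j) + (2 * n + 1).choose n = 2 * 4 ^ n := by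
  have h1 : ∑ j ∈ Finset.range (n + 1), ((2 * n + 2).choose j)
      = ∑ j ∈ Finset.range n, ((2 * n + 2).choose (j + 1)) + (2 * n + 2).choose 0 :=
    Finset.sum_range_succ' _ n
  have h2 : ∀ j, (2 * n + 2).choose (j + 1) = (2 * n + 1).choose j + (2 * n + 1).choose (j + 1) := by
    intro j
    exact Nat.choose_succ_succ (2 * n + 1) j
  rw [h1]
  simp only [h2, Finset.sum_add_distrib, Nat.choose_zero_right]
  have h3 : ∑ j ∈ Finset.range (n + 1), (2 * n + 1).choose j = 4 ^ n :=
    Nat.sum_range_choose_halfway n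
  have h4 : ∑ j ∈ Finset.range (n + 1), (2 * n + 1).choose j
      = ∑ j ∈ Finset.range n, (2 * n + 1).choose j + (2 * n + 1).choose n :=
    Finset.sum_range_succ _ n
  have h5 : ∑ j ∈ Finset.range (n + 1), (2 * n + 1).choose j
      = ∑ j ∈ Finset.range n, (2 * n + 1).choose (j + 1) + (2 * n + 1).choose 0 :=
    Finset.sum_range_succ' _ n
  simp only [Nat.choose_zero_right] at h5
  omega

/-- Parity-restricted half-row sum. -/
lemma ajSum (n : ℕ) :
    ∑ j ∈ Finset.range (n + 1), (if (n - j) % 2 = 0 then ((2 * n + 2).choose j : ℤ) else 0)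
      = 4 ^ n := by
  have halt : ∑ j ∈ Finset.range (n + 1), (-1 : ℤ) ^ j * ((2 * n + 2).choose j)
      = (-1) ^ n * ((2 * n + 1).choose n) := alt_partial (2 * n + 1) n
  have hfull : ∑ j ∈ Finset.range (n + 1), ((2 * n + 2).choose j : ℤ)
      = 2 * 4 ^ n - ((2 * n + 1).choose n : ℤ) := by
    have h := halfRow n
    have h' : ((∑ j ∈ Finset.range (n + 1), ((2 * n + 2).choose j) + (2 * n + 1).choose n : ℕ) : ℤ)
        = ((2 * 4 ^ n : ℕ) : ℤ) := by exact_mod_cast congrArg (Nat.cast (R := ℤ)) h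
    push_cast at h'
    linarith
  have hdiff : ∑ j ∈ Finset.range (n + 1),
      ((if (n - j) % 2 = 0 then ((2 * n + 2).choose j : ℤ) else 0)
        - (if (n - j) % 2 = 0 then 0 else ((2 * n + 2).choose j : ℤ)))
      = ((2 * n + 1).choose n : ℤ) := by
    have e1 : ∀ j ∈ Finset.range (n + 1),
        ((if (n - j) % 2 = 0 then ((2 * n + 2).choose j : ℤ) else 0)
          - (if (n - j) % 2 = 0 then 0 else ((2 * n + 2).choose j : ℤ)))
        = (-1) ^ n * ((-1 : ℤ) ^ j * ((2 * n + 2).choose j : ℤ)) := by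
      intro j hj
      rw [Finset.mem_range] at hj
      by_cases h : (n - j) % 2 = 0
      · rw [if_pos h, if_pos h]
        have hev : Even (n + j) := Nat.even_iff.mpr (by omega)
        have h1 : (-1 : ℤ) ^ n * (-1) ^ j = 1 := by
          rw [← pow_add]; exact Even.neg_one_pow hev
        rw [sub_zero, ← mul_assoc, h1, one_mul]
      · rw [if_neg h, if_neg h]
        have hod : Odd (n + j) := Nat.odd_iff.mpr (by omega)
        have h1 : (-1 : ℤ) ^ n * (-1) ^ j = -1 := by
          rw [← pow_add]; exact Odd.neg_one_pow hod
        rw [zero_sub, ← mul_assoc, h1]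
        ring
    rw [Finset.sum_congr rfl e1, ← Finset.mul_sum, halt, ← mul_assoc, ← pow_add]
    have hev : Even (n + n) := ⟨n, rfl⟩
    rw [Even.neg_one_pow hev, one_mul]
  have hsum : ∑ j ∈ Finset.range (n + 1),
      ((if (n - j) % 2 = 0 then ((2 * n + 2).choose j : ℤ) else 0)
        + (if (n - j) % 2 = 0 then 0 else ((2 * n + 2).choose j : ℤ)))
      = ∑ j ∈ Finset.range (n + 1), ((2 * n + 2).choose j : ℤ) := by
    apply Finset.sum_congr rfl
    intro j _
    by_cases h : (n - j) % 2 = 0 <;> simp [h]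
  rw [Finset.sum_add_distrib] at hsum
  rw [Finset.sum_sub_distrib] at hdiff
  rw [hfull] at hsum
  linarith

/-- The key binomial sum: `∑_{k ≤ n/2} C(2n+2, n-2k) = 4^n`. -/
lemma sumA (n : ℕ) :
    ∑ k ∈ Finset.range (n / 2 + 1), ((2 * n + 2).choose (n - 2 * k) : ℤ) = 4 ^ n := by
  rw [← ajSum n, ← Finset.sum_filter]
  apply Finset.sum_nbij' (fun k => n - 2 * k) (fun j => (n - j) / 2)
  · intro k hk
    rw [Finset.mem_range] at hk
    rw [Finset.mem_filter, Finset.mem_range]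
    omega
  · intro j hj
    rw [Finset.mem_filter, Finset.mem_range] at hj
    rw [Finset.mem_range]
    omega
  · intro k hk
    rw [Finset.mem_range] at hk
    omega
  · intro j hj
    rw [Finset.mem_filter, Finset.mem_range] at hj
    omega
  · intro k _
    rfl

lemma sumA_real (n : ℕ) :
    ∑ k ∈ Finset.range (n / 2 + 1), ((2 * n + 2).choose (n - 2 * k) : ℝ) = 4 ^ n := by
  exact_mod_cast sumA n

/-- Termwise binomial identity. -/
lemma chooseC (l k : ℕ) (h : 2 * k + 1 ≤ l) :
    ((l : ℝ) - 2 * k) * ((l : ℝ) + 2 * k + 2) * ((2 * l + 2).choose (l - 2 * k) : ℝ)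
      = (2 * (l : ℝ) + 2) * (2 * (l : ℝ) + 1) * ((2 * l).choose (l - 2 * k - 1) : ℝ) := by
  set a := l - 2 * k - 1 with ha
  have hl2k : l - 2 * k = a + 1 := by omega
  have step1 : (2 * l + 2) * ((2 * l + 1).choose a) = (2 * l + 2).choose (a + 1) * (a + 1) :=
    Nat.add_one_mul_choose_eq (2 * l + 1) a
  have hsym1 : (2 * l).choose (l + 2 * k + 1) = (2 * l).choose a := by
    have : (2 * l) - (l + 2 * k + 1) = a := by omega
    rw [← this]
    exact (Nat.choose_symm (by omega)).symm
  have hsym2 : (2 * l + 1).choose (l + 2 * k + 2) = (2 * l + 1).choose a := by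
    have : (2 * l + 1) - (l + 2 * k + 2) = a := by omega
    rw [← this]
    exact (Nat.choose_symm (by omega)).symm
  have step2 : (2 * l + 1) * ((2 * l).choose a) = (2 * l + 1).choose a * (l + 2 * k + 2) := by
    have := Nat.add_one_mul_choose_eq (2 * l) (l + 2 * k + 1)
    rw [hsym1] at this
    rw [hsym2] at this
    exact this
  have hca : (2 * l).choose (l - 2 * k - 1) = (2 * l).choose a := rfl
  rw [hl2k, hca]
  have c1 : (2 * (l : ℝ) + 2) * ((2 * l + 1).choose a : ℝ)
      = ((2 * l + 2).choose (a + 1) : ℝ) * ((a : ℝ) + 1) := by exact_mod_cast step1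
  have c2 : (2 * (l : ℝ) + 1) * ((2 * l).choose a : ℝ)
      = ((2 * l + 1).choose a : ℝ) * ((l : ℝ) + 2 * k + 2) := by exact_mod_cast step2
  have hacast : ((a : ℝ)) = (l : ℝ) - 2 * k - 1 := by
    have h' : (a : ℤ) = (l : ℤ) - 2 * k - 1 := by omega
    exact_mod_cast h'
  rw [hacast] at c1
  linear_combination (-((l : ℝ) + 2 * k + 2)) * c1 - (2 * (l : ℝ) + 2) * c2

/-- Key recurrence step. -/
lemma keyStep (l : ℕ) (hl : 1 ≤ l) :
    ((l : ℝ) + 1) ^ 2 * ∑ k ∈ Finset.range (l / 2 + 1),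
        ((2 * l + 2).choose (l - 2 * k) : ℝ) / (2 * (k : ℝ) + 1) ^ 2
      = 2 * (2 * (l : ℝ) + 1) * ((l : ℝ) + 1) * ∑ k ∈ Finset.range ((l - 1) / 2 + 1),
          ((2 * l).choose (l - 2 * k - 1) : ℝ) / (2 * (k : ℝ) + 1) ^ 2 + 4 ^ l := by
  rw [Finset.mul_sum, Finset.mul_sum]
  have split : ∀ k ∈ Finset.range (l / 2 + 1),
      ((l : ℝ) + 1) ^ 2 * (((2 * l + 2).choose (l - 2 * k) : ℝ) / (2 * (k : ℝ) + 1) ^ 2)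
      = (if 2 * k + 1 ≤ l then
          2 * (2 * (l : ℝ) + 1) * ((l : ℝ) + 1) *
            (((2 * l).choose (l - 2 * k - 1) : ℝ) / (2 * (k : ℝ) + 1) ^ 2)
        else 0) + ((2 * l + 2).choose (l - 2 * k) : ℝ) := by
    intro k hk
    rw [Finset.mem_range] at hk
    by_cases h : 2 * k + 1 ≤ l
    · rw [if_pos h]
      have hc := chooseC l k h
      have hm : (2 * (k : ℝ) + 1) ^ 2 ≠ 0 := by positivity
      field_simp
      nlinarith [hc]
    · rw [if_neg h]
      have h2k : 2 * k = l := by omega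
      have hz : l - 2 * k = 0 := by omega
      rw [hz, Nat.choose_zero_right]
      have hk' : (2 * (k : ℝ) + 1) = (l : ℝ) + 1 := by
        have : ((2 * k : ℕ) : ℝ) = (l : ℝ) := by exact_mod_cast congrArg (Nat.cast (R := ℝ)) h2k
        push_cast at this
        linarith
      rw [hk']
      have : ((l : ℝ) + 1) ^ 2 ≠ 0 := by positivity
      field_simp
      simp
  rw [Finset.sum_congr rfl split, Finset.sum_add_distrib, sumA_real l]
  congr 1
  have hsub : Finset.range ((l - 1) / 2 + 1) ⊆ Finset.range (l / 2 + 1) := by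
    apply Finset.range_subset_range.mpr
    omega
  rw [← Finset.sum_subset hsub]
  · apply Finset.sum_congr rfl
    intro k hk
    rw [Finset.mem_range] at hk
    rw [if_pos (by omega)]
  · intro k hk hk'
    rw [Finset.mem_range] at hk
    rw [Finset.mem_range] at hk'
    rw [if_neg (by omega)]

theorem binom_sum_identity (ℓ : ℕ) (hℓ : 1 ≤ ℓ) :
    4 * ∑ k ∈ Finset.range ((ℓ - 1) / 2 + 1),
        (Nat.choose (2 * ℓ) (ℓ - 2 * k - 1) : ℝ) / (2 * (k : ℝ) + 1) ^ 2 =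
      (Nat.choose (2 * ℓ) ℓ : ℝ) *
        ∑ j ∈ Finset.Icc 1 ℓ,
          (4 : ℝ) ^ j / ((Nat.choose (2 * j) j : ℝ) * (j : ℝ) ^ 2) := by
  induction ℓ, hℓ using Nat.le_induction with
  | base =>
      norm_num [Finset.Icc_self, Finset.sum_range_succ]
  | succ l hl ih =>
      -- rewrite the new LHS sum
      have hL : ∑ k ∈ Finset.range ((l + 1 - 1) / 2 + 1),
          (Nat.choose (2 * (l + 1)) (l + 1 - 2 * k - 1) : ℝ) / (2 * (k : ℝ) + 1) ^ 2
          = ∑ k ∈ Finset.range (l / 2 + 1),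
          ((2 * l + 2).choose (l - 2 * k) : ℝ) / (2 * (k : ℝ) + 1) ^ 2 := by
        have hr : (l + 1 - 1) / 2 + 1 = l / 2 + 1 := by omega
        rw [hr]
        apply Finset.sum_congr rfl
        intro k hk
        rw [Finset.mem_range] at hk
        have : Nat.choose (2 * (l + 1)) (l + 1 - 2 * k - 1) = (2 * l + 2).choose (l - 2 * k) := by
          congr 1 <;> omega
        rw [this]
      rw [hL, Finset.sum_Icc_succ_top (by omega : 1 ≤ l + 1)]
      have hkey := keyStep l hl
      have hcbN := Nat.succ_mul_centralBinom_succ l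
      simp only [Nat.centralBinom] at hcbN
      have hcb : ((l : ℝ) + 1) * ((2 * (l + 1)).choose (l + 1) : ℝ)
          = 2 * (2 * (l : ℝ) + 1) * ((2 * l).choose l : ℝ) := by
        exact_mod_cast congrArg (Nat.cast (R := ℝ)) hcbN
      set S1 : ℝ := ∑ k ∈ Finset.range (l / 2 + 1),
          ((2 * l + 2).choose (l - 2 * k) : ℝ) / (2 * (k : ℝ) + 1) ^ 2 with hS1
      set S0 : ℝ := ∑ k ∈ Finset.range ((l - 1) / 2 + 1),
          ((2 * l).choose (l - 2 * k - 1) : ℝ) / (2 * (k : ℝ) + 1) ^ 2 with hS0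
      set T : ℝ := ∑ j ∈ Finset.Icc 1 l,
          (4 : ℝ) ^ j / ((Nat.choose (2 * j) j : ℝ) * (j : ℝ) ^ 2) with hT
      have hCp : ((2 * (l + 1)).choose (l + 1) : ℝ) ≠ 0 :=
        Nat.cast_ne_zero.mpr (Nat.choose_pos (by omega : l + 1 ≤ 2 * (l + 1))).ne'
      have hP : ((l : ℝ) + 1) ≠ 0 := by positivity
      have hcast : (((l : ℕ) + 1 : ℕ) : ℝ) = (l : ℝ) + 1 := by push_cast; ring
      rw [mul_add]
      have hlast : ((2 * (l + 1)).choose (l + 1) : ℝ) *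
          ((4 : ℝ) ^ (l + 1) / (((2 * (l + 1)).choose (l + 1) : ℝ) * (((l + 1 : ℕ)) : ℝ) ^ 2))
          = 4 ^ (l + 1) / ((l : ℝ) + 1) ^ 2 := by
        rw [hcast]
        field_simp
      rw [hlast]
      -- now linear algebra
      have goal' : 4 * S1 = ((2 * (l + 1)).choose (l + 1) : ℝ) * T + 4 ^ (l + 1) / ((l : ℝ) + 1) ^ 2 := by
        have hP2 : ((l : ℝ) + 1) ^ 2 ≠ 0 := by positivity
        field_simp
        linear_combination 4 * hkey + 2 * (2 * (l : ℝ) + 1) * ((l : ℝ) + 1) * ih - ((l : ℝ) + 1) * T * hcb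
      linarith [goal']
end

section
/- For every integer ℓ ≥ 1, Σ_{k=0}^{ℓ} binom(2ℓ+1, ℓ-k) / (2k+1)^2 = (4^{2ℓ} / (binom(2ℓ, ℓ) · (2ℓ+1))) · Σ_{j=0}^{ℓ} binom(2j, j) / (4^j · (2j+1)). -/
open Finset

lemma half_sum (ℓ : ℕ) : ∑ k ∈ range (ℓ+1), (2*ℓ+1).choose (ℓ-k) = 4^ℓ := by
  rw [← Nat.sum_range_choose_halfway ℓ, ← Finset.sum_range_reflect]
  apply Finset.sum_congr rfl
  intro k hk
  simp only [mem_range] at hk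
  congr 1
  omega

lemma L2 (ℓ : ℕ) : ∑ k ∈ range (ℓ+1), ((2*ℓ).choose (ℓ-k) : ℝ) / ((ℓ:ℝ)+(k:ℝ)+1)
    = 4^ℓ/(2*(ℓ:ℝ)+1) := by
  have h : ∀ k ∈ range (ℓ+1), ((2*ℓ).choose (ℓ-k) : ℝ) / ((ℓ:ℝ)+(k:ℝ)+1)
      = ((2*ℓ+1).choose (ℓ-k) : ℝ)/(2*(ℓ:ℝ)+1) := by
    intro k hk
    have hk' : k ≤ ℓ := Nat.lt_succ_iff.mp (mem_range.mp hk)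
    have hnat : (2*ℓ).choose (ℓ-k) * (2*ℓ+1) = (2*ℓ+1).choose (ℓ-k) * (ℓ+k+1) := by
      have h0 := Nat.choose_mul_succ_eq (2*ℓ) (ℓ-k)
      rw [h0]; congr 1; omega
    have hc := congrArg (Nat.cast : ℕ → ℝ) hnat
    push_cast at hc
    have h1 : (ℓ:ℝ)+(k:ℝ)+1 ≠ 0 := by positivity
    have h2 : (2*(ℓ:ℝ)+1) ≠ 0 := by positivity
    field_simp
    linarith [hc]
  rw [Finset.sum_congr rfl h, ← Finset.sum_div]
  congr 1
  rw [← Nat.cast_sum]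
  rw [half_sum ℓ]
  push_cast
  ring

lemma termwise (n k : ℕ) (hk : k ≤ n) :
    ((2*n+3).choose (n+1-k) : ℝ) / (2*(k:ℝ)+1)^2
      = 8*((n:ℝ)+1)/(2*(n:ℝ)+3) * (((2*n+1).choose (n-k) : ℝ) / (2*(k:ℝ)+1)^2)
        + (1/(2*(n:ℝ)+3)) * (((2*n+2).choose (n+1-k) : ℝ) / ((n:ℝ)+2+(k:ℝ))) := by
  have hkr : (k:ℝ) ≤ (n:ℝ) := by exact_mod_cast hk
  -- B * (n+1-k) = (2n+2) * A
  have e1 : (2*n+2) * (2*n+1).choose (n-k) = (2*n+2).choose (n+1-k) * (n+1-k) := by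
    have h := Nat.add_one_mul_choose_eq (2*n+1) (n-k)
    have h2 : n-k+1 = n+1-k := by omega
    simp only [Nat.succ_eq_add_one, h2, show 2*n+1+1 = 2*n+2 from by omega] at h
    exact h
  -- B * (2n+3) = C * (n+2+k)
  have e2 : (2*n+2).choose (n+1-k) * (2*n+3) = (2*n+3).choose (n+1-k) * (n+2+k) := by
    have h := Nat.choose_mul_succ_eq (2*n+2) (n+1-k)
    rw [h]; congr 1; omega
  have hcast : ((n+1-k : ℕ) : ℝ) = (n:ℝ)+1-(k:ℝ) := by
    rw [Nat.cast_sub (by omega)]; push_cast; ring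
  have e1' := congrArg (Nat.cast : ℕ → ℝ) e1
  have e2' := congrArg (Nat.cast : ℕ → ℝ) e2
  push_cast [hcast] at e1' e2'
  have d1 : (n:ℝ)+1-(k:ℝ) ≠ 0 := by intro h; nlinarith
  have d2 : (n:ℝ)+2+(k:ℝ) ≠ 0 := by positivity
  have d3 : (2*(n:ℝ)+3) ≠ 0 := by positivity
  have hBval : ((2*n+2).choose (n+1-k) : ℝ)
      = (2*(n:ℝ)+2) * ((2*n+1).choose (n-k) : ℝ) / ((n:ℝ)+1-(k:ℝ)) := by
    field_simp
    linarith [e1']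
  have hCval : ((2*n+3).choose (n+1-k) : ℝ)
      = (2*(n:ℝ)+3) * (2*(n:ℝ)+2) * ((2*n+1).choose (n-k) : ℝ)
          / (((n:ℝ)+2+(k:ℝ)) * ((n:ℝ)+1-(k:ℝ))) := by
    rw [hBval] at e2'
    field_simp at e2' ⊢
    linarith [e2']
  rw [hCval, hBval]
  have d4 : (2*(k:ℝ)+1)^2 ≠ 0 := by positivity
  field_simp
  ring

lemma rec_step (n : ℕ) :
    ∑ k ∈ range (n+2), ((2*n+3).choose (n+1-k) : ℝ) / (2*(k:ℝ)+1)^2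
      = 8*((n:ℝ)+1)/(2*(n:ℝ)+3)
          * ∑ k ∈ range (n+1), ((2*n+1).choose (n-k) : ℝ) / (2*(k:ℝ)+1)^2
        + 4^(n+1)/(2*(n:ℝ)+3)^2 := by
  have hL2 := L2 (n+1)
  -- rewrite L2's sum: ℓ = n+1
  have hV : ∑ k ∈ range (n+2), ((2*n+2).choose (n+1-k) : ℝ) / ((n:ℝ)+2+(k:ℝ))
      = 4^(n+1)/(2*(n:ℝ)+3) := by
    have : ∀ k ∈ range (n+2), ((2*(n+1)).choose (n+1-k) : ℝ) / (((n:ℕ):ℝ)+1+(k:ℝ)+1)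
        = ((2*n+2).choose (n+1-k) : ℝ) / ((n:ℝ)+2+(k:ℝ)) := by
      intro k _
      have h2 : 2*(n+1) = 2*n+2 := by ring
      rw [h2]; ring_nf
    push_cast at hL2
    rw [← Finset.sum_congr rfl this]
    convert hL2 using 2 <;> push_cast <;> ring
  have hmain : ∑ k ∈ range (n+1), ((2*n+3).choose (n+1-k) : ℝ) / (2*(k:ℝ)+1)^2
      = 8*((n:ℝ)+1)/(2*(n:ℝ)+3)
          * ∑ k ∈ range (n+1), ((2*n+1).choose (n-k) : ℝ) / (2*(k:ℝ)+1)^2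
        + ∑ k ∈ range (n+1),
            (1/(2*(n:ℝ)+3)) * (((2*n+2).choose (n+1-k) : ℝ) / ((n:ℝ)+2+(k:ℝ))) := by
    rw [Finset.mul_sum, ← Finset.sum_add_distrib]
    apply Finset.sum_congr rfl
    intro k hk
    exact termwise n k (Nat.lt_succ_iff.mp (mem_range.mp hk))
  rw [Finset.sum_range_succ] at hV
  have hVlast : ((2*n+2).choose (n+1-(n+1)) : ℝ) / ((n:ℝ)+2+((n+1:ℕ):ℝ)) = 1/(2*(n:ℝ)+3) := by
    simp; push_cast; ring
  have hsum : ∑ k ∈ range (n+1), ((2*n+2).choose (n+1-k) : ℝ) / ((n:ℝ)+2+(k:ℝ))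
      = 4^(n+1)/(2*(n:ℝ)+3) - 1/(2*(n:ℝ)+3) := by
    rw [hVlast] at hV; linarith
  rw [Finset.sum_range_succ, hmain, ← Finset.mul_sum, hsum]
  have hlast : ((2*n+3).choose (n+1-(n+1)) : ℝ) / (2*((n+1:ℕ):ℝ)+1)^2 = 1/(2*(n:ℝ)+3)^2 := by
    simp; push_cast; ring
  rw [hlast]
  have d3 : (2*(n:ℝ)+3) ≠ 0 := by positivity
  field_simp
  ring

lemma main_id (n : ℕ) :
    ∑ k ∈ Finset.range (n + 1),
        (Nat.choose (2 * n + 1) (n - k) : ℝ) / (2 * (k : ℝ) + 1) ^ 2 =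
      (4 : ℝ) ^ (2 * n) / ((Nat.choose (2 * n) n : ℝ) * (2 * (n : ℝ) + 1)) *
        ∑ j ∈ Finset.range (n + 1),
          (Nat.choose (2 * j) j : ℝ) / ((4 : ℝ) ^ j * (2 * (j : ℝ) + 1)) := by
  induction n with
  | zero => norm_num
  | succ n ih =>
    -- rewrite LHS via rec_step
    have e1 : 2*(n+1)+1 = 2*n+3 := by ring
    have e2 : n+1+1 = n+2 := rfl
    rw [e1, e2, rec_step n, ih]
    -- now pure algebra on the RHS
    rw [Finset.sum_range_succ
      (fun j => (Nat.choose (2 * j) j : ℝ) / ((4 : ℝ) ^ j * (2 * (j : ℝ) + 1))) (n+1)]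
    set T := ∑ j ∈ Finset.range (n+1),
        (Nat.choose (2 * j) j : ℝ) / ((4 : ℝ) ^ j * (2 * (j : ℝ) + 1)) with hT
    -- key binomial fact
    have hnat : (n+1)^2 * (2*(n+1)).choose (n+1) = (2*n+2)*(2*n+1)*((2*n).choose n) := by
      have h1 := Nat.add_one_mul_choose_eq (2*n) n
      -- (2n+1) * C(2n,n) = C(2n+1, n+1) * (n+1)
      have h2 := Nat.add_one_mul_choose_eq (2*n+1) n
      -- (2n+2) * C(2n+1,n) = C(2n+2, n+1) * (n+1)
      have h3 : (2*n+1).choose (n+1) = (2*n+1).choose n := by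
        rw [← Nat.choose_symm (by omega : n ≤ 2*n+1)]
        congr 1; omega
      have e3 : 2*(n+1) = 2*n+1+1 := by ring
      rw [e3]
      nlinarith [h1, h2, h3]
    have hc : ((n:ℝ)+1)^2 * ((2*(n+1)).choose (n+1) : ℝ)
        = (2*(n:ℝ)+2)*(2*(n:ℝ)+1)*((2*n).choose n : ℝ) := by
      exact_mod_cast congrArg (Nat.cast : ℕ → ℝ) hnat
    have p1 : ((2*n).choose n : ℝ) ≠ 0 := by
      exact_mod_cast (Nat.choose_pos (by omega : n ≤ 2*n)).ne'
    have p2 : ((2*(n+1)).choose (n+1) : ℝ) ≠ 0 := by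
      exact_mod_cast (Nat.choose_pos (by omega : n+1 ≤ 2*(n+1))).ne'
    have p3 : (2*(n:ℝ)+1) ≠ 0 := by positivity
    have p4 : (2*(n:ℝ)+3) ≠ 0 := by positivity
    have p5 : ((4:ℝ)^(n+1)) ≠ 0 := by positivity
    have p6 : ((4:ℝ)^(2*n)) ≠ 0 := by positivity
    have p7 : ((n:ℝ)+1) ≠ 0 := by positivity
    have Cval : ((2*(n+1)).choose (n+1) : ℝ)
        = (2*(n:ℝ)+2)*(2*(n:ℝ)+1)*((2*n).choose n : ℝ) / ((n:ℝ)+1)^2 := by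
      rw [eq_div_iff (by positivity)]
      linear_combination hc
    rw [Cval]
    push_cast
    field_simp
    ring

theorem binom_sum_identity' (ℓ : ℕ) (hℓ : 1 ≤ ℓ) :
    ∑ k ∈ Finset.range (ℓ + 1),
        (Nat.choose (2 * ℓ + 1) (ℓ - k) : ℝ) / (2 * (k : ℝ) + 1) ^ 2 =
      (4 : ℝ) ^ (2 * ℓ) / ((Nat.choose (2 * ℓ) ℓ : ℝ) * (2 * (ℓ : ℝ) + 1)) *
        ∑ j ∈ Finset.range (ℓ + 1),
          (Nat.choose (2 * j) j : ℝ) / ((4 : ℝ) ^ j * (2 * (j : ℝ) + 1)) :=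
  main_id ℓ
end

section
/- The infinite series Σ_{j=1}^{∞} 4^j / (binom(2j,j) · j^2) converges and equals π²/2. -/
open Real Set MeasureTheory intervalIntegral Filter Topology


lemma step_rec (n : ℕ) :
    (2*(n:ℝ)+3) * ∫ x in (0:ℝ)..1, (1 - x^2)^(n+1)
      = (2*(n:ℝ)+2) * ∫ x in (0:ℝ)..1, (1 - x^2)^n := by
  have hderiv : ∀ x ∈ uIcc (0:ℝ) 1, HasDerivAt (fun x : ℝ => x * (1 - x^2)^(n+1))
      ((2*(n:ℝ)+3) * (1 - x^2)^(n+1) - (2*(n:ℝ)+2) * (1 - x^2)^n) x := by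
    intro x _
    have h1 : HasDerivAt (fun x : ℝ => x * (1 - x^2)^(n+1))
        (1 * (1 - x^2)^(n+1) + x * (((n:ℝ)+1) * (1 - x^2)^n * (0 - 2*x))) x := by
      have hp : HasDerivAt (fun x : ℝ => (1 - x^2)^(n+1))
          (((n:ℝ)+1) * (1 - x^2)^n * (0 - 2*x)) x := by
        have := (((hasDerivAt_pow 2 x).const_sub 1).pow (n+1))
        refine this.congr_deriv ?_
        push_cast; ring
      exact (hasDerivAt_id x).mul hp
    convert h1 using 1
    ring
  have hcont : Continuous fun x : ℝ =>
      (2*(n:ℝ)+3) * (1 - x^2)^(n+1) - (2*(n:ℝ)+2) * (1 - x^2)^n := by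
    continuity
  have h0 := integral_eq_sub_of_hasDerivAt hderiv (hcont.intervalIntegrable 0 1)
  simp only [one_pow, mul_one] at h0
  have hi1 : IntervalIntegrable (fun x : ℝ => (1 - x^2)^(n+1)) volume 0 1 :=
    (by continuity : Continuous fun x : ℝ => (1 - x^2)^(n+1)).intervalIntegrable 0 1
  have hi2 : IntervalIntegrable (fun x : ℝ => (1 - x^2)^n) volume 0 1 :=
    (by continuity : Continuous fun x : ℝ => (1 - x^2)^n).intervalIntegrable 0 1
  rw [integral_sub ((hi1).const_mul _) ((hi2).const_mul _),
    intervalIntegral.integral_const_mul, intervalIntegral.integral_const_mul] at h0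
  norm_num at h0
  linarith [h0]

lemma integral_one_sub_sq_pow (n : ℕ) :
    ∫ x in (0:ℝ)..1, (1 - x^2)^n
      = 4^n * (n.factorial:ℝ)^2 / ((2*n+1).factorial) := by
  induction n with
  | zero => simp
  | succ m ih =>
    have hrec := step_rec m
    have h3 : (2*(m:ℝ)+3) ≠ 0 := by positivity
    have : ∫ x in (0:ℝ)..1, (1 - x^2)^(m+1)
        = (2*(m:ℝ)+2)/(2*(m:ℝ)+3) * ∫ x in (0:ℝ)..1, (1 - x^2)^m := by
      field_simp at hrec ⊢
      linarith [hrec]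
    rw [this, ih]
    have e1 : (2*(m+1)+1).factorial = (2*m+3) * ((2*m+2) * (2*m+1).factorial) := by
      have : 2*(m+1)+1 = (2*m+2)+1 := by ring
      rw [this, Nat.factorial_succ, show 2*m+2 = (2*m+1)+1 from by ring, Nat.factorial_succ]
    have e2 : (m+1).factorial = (m+1) * m.factorial := Nat.factorial_succ m
    rw [e1, e2]
    push_cast
    have hf1 : ((2*m+1).factorial : ℝ) ≠ 0 := by positivity
    field_simp
    ring


lemma neg_log_le (x : ℝ) (hx : 0 < x) : -Real.log x ≤ 2 * x ^ (-(1:ℝ)/2) := by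
  have h1 : Real.log (x ^ (-(1:ℝ)/2)) ≤ x ^ (-(1:ℝ)/2) - 1 :=
    Real.log_le_sub_one_of_pos (Real.rpow_pos_of_pos hx _)
  rw [Real.log_rpow hx] at h1
  nlinarith [Real.rpow_pos_of_pos hx (-(1:ℝ)/2)]

lemma intInt_pow_neg_log (k : ℕ) :
    IntervalIntegrable (fun x : ℝ => x^k * (-Real.log x)) volume 0 1 := by
  rw [intervalIntegrable_iff_integrableOn_Ioc_of_le (by norm_num)]
  have hg : IntegrableOn (fun x : ℝ => 2 * x ^ (-(1:ℝ)/2)) (Ioc 0 1) volume := by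
    have := (intervalIntegrable_rpow' (a := 0) (b := 1) (r := -(1:ℝ)/2) (by norm_num))
    rw [intervalIntegrable_iff_integrableOn_Ioc_of_le (by norm_num)] at this
    exact this.const_mul 2
  refine Integrable.mono hg ?_ ?_
  · refine (Measurable.aestronglyMeasurable ?_).restrict
    exact (measurable_id.pow_const k).mul Real.measurable_log.neg
  · filter_upwards [ae_restrict_mem measurableSet_Ioc] with x hx
    have hx0 : 0 < x := hx.1
    have hx1 : x ≤ 1 := hx.2
    have hlog : 0 ≤ -Real.log x := by
      simp only [neg_nonneg]
      exact Real.log_nonpos hx0.le hx1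
    have hxk : x ^ k ≤ 1 := pow_le_one₀ hx0.le hx1
    have h2 : 0 < x ^ (-(1:ℝ)/2) := Real.rpow_pos_of_pos hx0 _
    rw [Real.norm_eq_abs, Real.norm_eq_abs, abs_of_nonneg (by positivity),
      abs_of_nonneg (by positivity)]
    calc x^k * (-Real.log x) ≤ 1 * (-Real.log x) := by
          exact mul_le_mul_of_nonneg_right hxk hlog
      _ = -Real.log x := one_mul _
      _ ≤ 2 * x ^ (-(1:ℝ)/2) := neg_log_le x hx0

lemma integral_pow_neg_log (k : ℕ) :
    ∫ x in (0:ℝ)..1, x^k * (-Real.log x) = 1/((k:ℝ)+1)^2 := by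
  set c : ℝ := (k:ℝ)+1 with hc
  have hc0 : c ≠ 0 := by positivity
  have hderiv : ∀ x ∈ Ioo (0:ℝ) 1,
      HasDerivAt (fun x : ℝ => x^(k+1) * (-Real.log x) / c + x^(k+1) / c^2)
        (x^k * (-Real.log x)) x := by
    intro x hx
    have hx0 : x ≠ 0 := hx.1.ne'
    have h1 : HasDerivAt (fun x : ℝ => x^(k+1) * (-Real.log x))
        (((k:ℝ)+1) * x^k * (-Real.log x) + x^(k+1) * (-x⁻¹)) x := by
      have := (hasDerivAt_pow (k+1) x).mul (Real.hasDerivAt_log hx0).neg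
      refine this.congr_deriv ?_
      push_cast [Pi.neg_apply]; ring
    have h2 := (h1.div_const c).add ((hasDerivAt_pow (k+1) x).div_const (c^2))
    have hxx : x^(k+1) * -x⁻¹ = -x^k := by
      rw [pow_succ, mul_assoc]
      rw [show x * -x⁻¹ = -1 from by field_simp]
      ring
    rw [hxx, Nat.add_sub_cancel] at h2
    refine h2.congr_deriv ?_
    have hck : ((k+1 : ℕ) : ℝ) = c := by push_cast [hc]; ring
    rw [hck]
    field_simp
    ring
  have ha : Tendsto (fun x : ℝ => x^(k+1) * (-Real.log x) / c + x^(k+1) / c^2)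
      (𝓝[>] (0:ℝ)) (𝓝 0) := by
    have h1 : Tendsto (fun x : ℝ => Real.log x * x ^ ((k:ℝ)+1)) (𝓝[>] (0:ℝ)) (𝓝 0) :=
      tendsto_log_mul_rpow_nhdsGT_zero (by positivity)
    have h1' : Tendsto (fun x : ℝ => x^(k+1) * (-Real.log x)) (𝓝[>] (0:ℝ)) (𝓝 0) := by
      have := h1.neg
      rw [neg_zero] at this
      refine this.congr' ?_
      filter_upwards [self_mem_nhdsWithin] with x (hx : 0 < x)
      rw [← Real.rpow_natCast x (k+1)]
      push_cast
      ring
    have h2 : Tendsto (fun x : ℝ => x^(k+1) / c^2) (𝓝[>] (0:ℝ)) (𝓝 0) := by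
      have : Tendsto (fun x : ℝ => x^(k+1) / c^2) (𝓝 (0:ℝ)) (𝓝 ((0:ℝ)^(k+1)/c^2)) := by
        exact ((continuous_pow (k+1)).div_const _).tendsto 0
      simp only [zero_pow (Nat.succ_ne_zero k), zero_div] at this
      exact this.mono_left nhdsWithin_le_nhds
    have := (h1'.div_const c).add h2
    simpa using this
  have hb : Tendsto (fun x : ℝ => x^(k+1) * (-Real.log x) / c + x^(k+1) / c^2)
      (𝓝[<] (1:ℝ)) (𝓝 (1/c^2)) := by
    have : ContinuousAt (fun x : ℝ => x^(k+1) * (-Real.log x) / c + x^(k+1) / c^2) 1 := by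
      have hlog : ContinuousAt Real.log 1 := Real.continuousAt_log (by norm_num)
      fun_prop (disch := norm_num)
    have h3 : Tendsto (fun x : ℝ => x^(k+1) * (-Real.log x) / c + x^(k+1) / c^2)
        (𝓝[<] (1:ℝ)) (𝓝 (1^(k+1) * (-Real.log 1) / c + 1^(k+1) / c^2)) :=
      this.tendsto.mono_left (nhdsWithin_le_nhds (s := Iio 1))
    simpa using h3
  have := integral_eq_sub_of_hasDerivAt_of_tendsto (by norm_num) hderiv
    (intInt_pow_neg_log k) ha hb
  rw [this]; ring


lemma oddBasel : HasSum (fun k : ℕ => 1/(2*(k:ℝ)+1)^2) (π^2/8) := by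
  have h := hasSum_zeta_two
  set f : ℕ → ℝ := fun n => 1/(n:ℝ)^2 with hf
  have heven : HasSum (fun k => f (2*k)) (π^2/24) := by
    have h4 := h.mul_left (1/4)
    have he : (fun n => (1/4) * f n) = fun n => f (2*n) := by
      funext n
      simp only [hf]
      push_cast
      rcases Nat.eq_zero_or_pos n with h0 | h0
      · simp [h0]
      · have : (n:ℝ) ≠ 0 := Nat.cast_ne_zero.mpr h0.ne'
        field_simp; ring
    rw [he] at h4
    have : (1:ℝ)/4 * (π^2/6) = π^2/24 := by ring
    rwa [this] at h4
  have hodd : Summable (fun k => f (2*k+1)) :=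
    h.summable.comp_injective (fun a b hab => by omega)
  have htot := heven.even_add_odd hodd.hasSum
  have huniq : π^2/24 + ∑' k, f (2*k+1) = π^2/6 := htot.unique h
  have hval : ∑' k, f (2*k+1) = π^2/8 := by linarith
  have := hval ▸ hodd.hasSum
  convert this using 2 with k
  simp only [hf]
  push_cast
  ring




noncomputable def trm (n : ℕ) : ℝ :=
  (4 : ℝ) ^ (n + 1) / ((Nat.choose (2 * (n + 1)) (n + 1) : ℝ) * ((n : ℝ) + 1) ^ 2)

lemma termEq (n : ℕ) :
    ∫ x in (0:ℝ)..1, 2*(1 - x^2)^n/((n:ℝ)+1) = trm n := by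
  have h1 : ∀ x : ℝ, 2*(1 - x^2)^n/((n:ℝ)+1) = (2/((n:ℝ)+1)) * (1 - x^2)^n := by
    intro x; ring
  simp_rw [h1]
  rw [intervalIntegral.integral_const_mul, integral_one_sub_sq_pow]
  have hch : (Nat.choose (2*(n+1)) (n+1)) * ((n+1).factorial * (n+1).factorial)
      = (2*(n+1)).factorial := by
    have := Nat.choose_mul_factorial_mul_factorial (show n+1 ≤ 2*(n+1) by omega)
    have h2 : 2*(n+1) - (n+1) = n+1 := by omega
    rw [h2] at this
    linarith [this]
  have hcast : (Nat.choose (2*(n+1)) (n+1) : ℝ) * ((n+1).factorial * (n+1).factorial : ℕ)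
      = ((2*(n+1)).factorial : ℕ) := by exact_mod_cast hch
  unfold trm
  have e1 : (2*(n+1)).factorial = (2*n+2) * (2*n+1).factorial := by
    rw [show 2*(n+1) = (2*n+1)+1 from by ring, Nat.factorial_succ]
  have e2 : (n+1).factorial = (n+1) * n.factorial := Nat.factorial_succ n
  rw [e1, e2] at hcast
  push_cast at hcast ⊢
  have hf : (n.factorial : ℝ) ≠ 0 := by positivity
  have hf2 : ((2*n+1).factorial : ℝ) ≠ 0 := by positivity
  have hn1 : ((n:ℝ)+1) ≠ 0 := by positivity
  have hch0 : (Nat.choose (2*(n+1)) (n+1) : ℝ) ≠ 0 := by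
    have := Nat.choose_pos (show n+1 ≤ 2*(n+1) by omega)
    positivity
  push_cast at hch0
  field_simp
  have hc' : (Nat.choose (2*(n+1)) (n+1) : ℝ) * ((n:ℝ)+1) * (n.factorial : ℝ)^2
      = 2 * ((2*n+1).factorial : ℝ) := by
    apply mul_left_cancel₀ hn1
    linear_combination hcast
  linear_combination (2*(4:ℝ)^n) * hc'


lemma hfsum {u : ℝ} (hu : u ∈ Ioo (0:ℝ) 1) :
    HasSum (fun n : ℕ => 2*(1 - u^2)^n/((n:ℝ)+1)) (-4*Real.log u/(1-u^2)) := by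
  obtain ⟨hu0, hu1⟩ := hu
  set x : ℝ := 1 - u^2 with hx
  have hx0 : 0 < x := by nlinarith
  have hx1 : x < 1 := by nlinarith
  have h := Real.hasSum_pow_div_log_of_abs_lt_one (x := x) (by rw [abs_of_pos hx0]; exact hx1)
  have h2 := h.mul_left (2/x)
  have hux : (1 : ℝ) - x = u^2 := by rw [hx]; ring
  have hval : 2/x * (-Real.log (1-x)) = -4*Real.log u/(1-u^2) := by
    rw [hux, show u^2 = u^(2:ℕ) from by norm_num, Real.log_pow]
    push_cast
    rw [← hx]
    ring
  rw [hval] at h2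
  have hfun : (fun n : ℕ => 2/x * (x^(n+1)/((n:ℝ)+1)))
      = fun n : ℕ => 2*(1 - u^2)^n/((n:ℝ)+1) := by
    funext n
    rw [← hx, pow_succ]
    field_simp
  rwa [hfun] at h2

lemma hgsum {u : ℝ} (hu : u ∈ Ioo (0:ℝ) 1) :
    HasSum (fun k : ℕ => 4*u^(2*k)*(-Real.log u)) (-4*Real.log u/(1-u^2)) := by
  obtain ⟨hu0, hu1⟩ := hu
  have hu2 : u^2 < 1 := by nlinarith
  have h := hasSum_geometric_of_lt_one (sq_nonneg u) hu2
  have h2 := h.mul_left (4*(-Real.log u))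
  have hfun : (fun k : ℕ => 4*(-Real.log u) * (u^2)^k)
      = fun k : ℕ => 4*u^(2*k)*(-Real.log u) := by
    funext k
    rw [← pow_mul]
    ring
  rw [hfun] at h2
  have hval : 4*(-Real.log u) * ((1:ℝ) - u^2)⁻¹ = -4*Real.log u/(1-u^2) := by
    rw [div_eq_mul_inv]
    ring
  rwa [hval] at h2














lemma E1 (n : ℕ) : ∫⁻ u in Ioo (0:ℝ) 1, ENNReal.ofReal (2*(1-u^2)^n/((n:ℝ)+1))
    = ENNReal.ofReal (trm n) := by
  have hcont : Continuous (fun u : ℝ => 2*(1-u^2)^n/((n:ℝ)+1)) :=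
    ((continuous_const.mul ((continuous_const.sub (continuous_pow 2)).pow n)).div_const _)
  have hint : IntegrableOn (fun u : ℝ => 2*(1-u^2)^n/((n:ℝ)+1)) (Ioo 0 1) volume :=
    (hcont.integrableOn_Icc).mono_set Ioo_subset_Icc_self
  have hnn : 0 ≤ᵐ[volume.restrict (Ioo (0:ℝ) 1)] fun u : ℝ => 2*(1-u^2)^n/((n:ℝ)+1) := by
    filter_upwards [ae_restrict_mem measurableSet_Ioo] with u hu
    have h1 : (0:ℝ) ≤ 1 - u^2 := by nlinarith [hu.1, hu.2]
    positivity
  rw [← ofReal_integral_eq_lintegral_ofReal hint hnn]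
  congr 1
  rw [← integral_Ioc_eq_integral_Ioo, ← integral_of_le zero_le_one]
  exact termEq n

lemma E2 (k : ℕ) : ∫⁻ u in Ioo (0:ℝ) 1, ENNReal.ofReal (4*u^(2*k)*(-Real.log u))
    = ENNReal.ofReal (4*(1/(2*(k:ℝ)+1)^2)) := by
  have hfun : (fun u : ℝ => 4*u^(2*k)*(-Real.log u))
      = fun u : ℝ => 4*(u^(2*k)*(-Real.log u)) := by funext u; ring
  have hii := (intInt_pow_neg_log (2*k)).const_mul 4
  rw [← hfun] at hii
  have hint : IntegrableOn (fun u : ℝ => 4*u^(2*k)*(-Real.log u)) (Ioo 0 1) volume :=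
    hii.1.mono_set Ioo_subset_Ioc_self
  have hnn : 0 ≤ᵐ[volume.restrict (Ioo (0:ℝ) 1)] fun u : ℝ => 4*u^(2*k)*(-Real.log u) := by
    filter_upwards [ae_restrict_mem measurableSet_Ioo] with u hu
    have h1 : 0 ≤ -Real.log u := by
      simp only [neg_nonneg]; exact Real.log_nonpos hu.1.le hu.2.le
    have h2 : 0 ≤ u := hu.1.le
    positivity
  rw [← ofReal_integral_eq_lintegral_ofReal hint hnn]
  congr 1
  rw [← integral_Ioc_eq_integral_Ioo, ← integral_of_le zero_le_one, hfun,
    intervalIntegral.integral_const_mul, integral_pow_neg_log]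
  push_cast
  ring_nf

lemma cbs_key : ∑' n, ENNReal.ofReal (trm n) = ENNReal.ofReal (π^2/2) := by
  have hmf : ∀ n : ℕ, AEMeasurable (fun u : ℝ => ENNReal.ofReal (2*(1-u^2)^n/((n:ℝ)+1)))
      (volume.restrict (Ioo (0:ℝ) 1)) := by
    intro n
    exact (((continuous_const.mul ((continuous_const.sub (continuous_pow 2)).pow n)).div_const
      _).measurable.ennreal_ofReal).aemeasurable
  have hmg : ∀ k : ℕ, AEMeasurable (fun u : ℝ => ENNReal.ofReal (4*u^(2*k)*(-Real.log u)))
      (volume.restrict (Ioo (0:ℝ) 1)) := by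
    intro k
    exact (((measurable_const.mul (measurable_id.pow_const (2*k))).mul
      Real.measurable_log.neg).ennreal_ofReal).aemeasurable
  have hodd4 : HasSum (fun k : ℕ => 4*(1/(2*(k:ℝ)+1)^2)) (π^2/2) := by
    have := oddBasel.mul_left 4
    rwa [show 4*(π^2/8) = π^2/2 from by ring] at this
  calc ∑' n, ENNReal.ofReal (trm n)
      = ∑' n : ℕ, ∫⁻ u in Ioo (0:ℝ) 1, ENNReal.ofReal (2*(1-u^2)^n/((n:ℝ)+1)) := by
        exact (tsum_congr fun n => (E1 n).symm)
    _ = ∫⁻ u in Ioo (0:ℝ) 1, ∑' n : ℕ, ENNReal.ofReal (2*(1-u^2)^n/((n:ℝ)+1)) :=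
        (lintegral_tsum hmf).symm
    _ = ∫⁻ u in Ioo (0:ℝ) 1, ∑' k : ℕ, ENNReal.ofReal (4*u^(2*k)*(-Real.log u)) := by
        refine lintegral_congr_ae ?_
        filter_upwards [ae_restrict_mem measurableSet_Ioo] with u hu
        have hf := hfsum hu
        have hg := hgsum hu
        have hnn1 : ∀ n : ℕ, 0 ≤ 2*(1-u^2)^n/((n:ℝ)+1) := by
          intro n
          have h1 : (0:ℝ) ≤ 1 - u^2 := by nlinarith [hu.1, hu.2]
          positivity
        have hnn2 : ∀ k : ℕ, 0 ≤ 4*u^(2*k)*(-Real.log u) := by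
          intro k
          have h1 : 0 ≤ -Real.log u := by
            simp only [neg_nonneg]; exact Real.log_nonpos hu.1.le hu.2.le
          have h2 : 0 ≤ u := hu.1.le
          positivity
        rw [← ENNReal.ofReal_tsum_of_nonneg hnn1 hf.summable,
          ← ENNReal.ofReal_tsum_of_nonneg hnn2 hg.summable,
          hf.tsum_eq, hg.tsum_eq]
    _ = ∑' k : ℕ, ∫⁻ u in Ioo (0:ℝ) 1, ENNReal.ofReal (4*u^(2*k)*(-Real.log u)) :=
        lintegral_tsum hmg
    _ = ∑' k : ℕ, ENNReal.ofReal (4*(1/(2*(k:ℝ)+1)^2)) := tsum_congr fun k => E2 k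
    _ = ENNReal.ofReal (π^2/2) := by
        rw [← ENNReal.ofReal_tsum_of_nonneg (fun k => by positivity) hodd4.summable,
          hodd4.tsum_eq]

theorem central_binom_series_pi_sq :
    HasSum
      (fun j : ℕ =>
        (4 : ℝ) ^ (j + 1) /
          ((Nat.choose (2 * (j + 1)) (j + 1) : ℝ) * ((j : ℝ) + 1) ^ 2))
      (Real.pi ^ 2 / 2) := by
  have hnn : ∀ n, 0 ≤ trm n := by
    intro n
    unfold trm
    positivity
  have hsummable : Summable trm := by
    have h := ENNReal.summable_toReal (f := fun n => ENNReal.ofReal (trm n))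
      (by rw [cbs_key]; exact ENNReal.ofReal_ne_top)
    exact h.congr fun n => ENNReal.toReal_ofReal (hnn n)
  have htsum : ∑' n, trm n = π^2/2 := by
    have h1 : ENNReal.ofReal (∑' n, trm n) = ENNReal.ofReal (π^2/2) := by
      rw [ENNReal.ofReal_tsum_of_nonneg hnn hsummable, cbs_key]
    exact (ENNReal.ofReal_eq_ofReal_iff (tsum_nonneg hnn) (by positivity)).mp h1
  exact htsum ▸ hsummable.hasSum
end

section
/- The infinite series Σ_{k=0}^{∞} binom(2k,k) / (8^k · (2k+2)) converges and equals 2 - √2. -/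
open Finset

lemma cb_le_four_pow (n : ℕ) : Nat.centralBinom n ≤ 4 ^ n := by
  calc Nat.centralBinom n = (2 * n).choose n := rfl
    _ ≤ (2 * n + 1).choose n := Nat.choose_le_choose n (Nat.le_succ _)
    _ ≤ 4 ^ n := Nat.choose_middle_le_pow n

lemma catalan_conv (n : ℕ) :
    catalan (n + 1) = ∑ i ∈ range (n + 1), catalan i * catalan (n - i) := by
  rw [catalan_succ', Nat.sum_antidiagonal_eq_sum_range_succ_mk]

lemma refl_sum (n : ℕ) :
    ∑ i ∈ range (n + 1), (n - i) * (catalan (n - i) * catalan i)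
      = ∑ i ∈ range (n + 1), i * (catalan i * catalan (n - i)) := by
  rw [← Finset.sum_range_reflect (fun i => i * (catalan i * catalan (n - i))) (n + 1)]
  apply Finset.sum_congr rfl
  intro i hi
  have : i ≤ n := Nat.lt_succ_iff.mp (Finset.mem_range.mp hi)
  simp [Nat.sub_sub_self this, Nat.add_sub_cancel]

lemma sym_sum (n : ℕ) :
    2 * ∑ i ∈ range (n + 1), i * (catalan i * catalan (n - i))
      = n * catalan (n + 1) := by
  have h3 : ∑ i ∈ range (n + 1), i * (catalan i * catalan (n - i))
      + ∑ i ∈ range (n + 1), (n - i) * (catalan (n - i) * catalan i)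
      = ∑ i ∈ range (n + 1), n * (catalan i * catalan (n - i)) := by
    rw [← Finset.sum_add_distrib]
    apply Finset.sum_congr rfl
    intro i hi
    have hin : i ≤ n := Nat.lt_succ_iff.mp (Finset.mem_range.mp hi)
    rw [mul_comm (catalan (n - i)) (catalan i), ← add_mul, Nat.add_sub_cancel' hin]
  rw [← Finset.mul_sum, ← catalan_conv] at h3
  have h2 := refl_sum n
  omega

lemma I_lemma (n : ℕ) :
    2 * ∑ i ∈ range (n + 1), catalan i * Nat.centralBinom (n - i)
      = Nat.centralBinom (n + 1) := by
  have key : ∀ i ∈ range (n + 1),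
      catalan i * Nat.centralBinom (n - i)
        = catalan i * catalan (n - i) + (n - i) * (catalan (n - i) * catalan i) := by
    intro i hi
    rw [← succ_mul_catalan_eq_centralBinom (n - i)]
    ring
  rw [Finset.sum_congr rfl key, Finset.sum_add_distrib]
  have h4 := refl_sum n
  have hsym := sym_sum n
  have hc : ∑ i ∈ range (n + 1), catalan i * catalan (n - i) = catalan (n + 1) :=
    (catalan_conv n).symm
  have hcb : (n + 1 + 1) * catalan (n + 1) = Nat.centralBinom (n + 1) :=
    succ_mul_catalan_eq_centralBinom (n + 1)
  calc 2 * (∑ i ∈ range (n + 1), catalan i * catalan (n - i)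
        + ∑ i ∈ range (n + 1), (n - i) * (catalan (n - i) * catalan i))
      = 2 * ∑ i ∈ range (n + 1), catalan i * catalan (n - i)
        + 2 * ∑ i ∈ range (n + 1), i * (catalan i * catalan (n - i)) := by rw [h4]; ring
    _ = 2 * catalan (n + 1) + n * catalan (n + 1) := by rw [hc, hsym]
    _ = (n + 1 + 1) * catalan (n + 1) := by ring
    _ = Nat.centralBinom (n + 1) := hcb

lemma cb_rec (i : ℕ) :
    Nat.centralBinom (i + 1) + 2 * catalan i = 4 * Nat.centralBinom i := by
  apply Nat.eq_of_mul_eq_mul_left (show 0 < i + 1 by omega)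
  calc (i + 1) * (Nat.centralBinom (i + 1) + 2 * catalan i)
      = (i + 1) * Nat.centralBinom (i + 1) + 2 * ((i + 1) * catalan i) := by ring
    _ = 2 * (2 * i + 1) * Nat.centralBinom i + 2 * Nat.centralBinom i := by
        rw [Nat.succ_mul_centralBinom_succ, succ_mul_catalan_eq_centralBinom]
    _ = (i + 1) * (4 * Nat.centralBinom i) := by ring

lemma conv_four_pow (n : ℕ) :
    ∑ i ∈ range (n + 1), Nat.centralBinom i * Nat.centralBinom (n - i) = 4 ^ n := by
  induction n with
  | zero => simp [Nat.centralBinom_zero]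
  | succ n ih =>
    rw [Finset.sum_range_succ' (fun i => Nat.centralBinom i * Nat.centralBinom (n + 1 - i))]
    have e1 : ∀ i ∈ range (n + 1),
        Nat.centralBinom (i + 1) * Nat.centralBinom (n + 1 - (i + 1))
          = Nat.centralBinom (i + 1) * Nat.centralBinom (n - i) := by
      intro i hi; congr 2; omega
    rw [Finset.sum_congr rfl e1]
    have key : ∑ i ∈ range (n + 1), Nat.centralBinom (i + 1) * Nat.centralBinom (n - i)
        + 2 * ∑ i ∈ range (n + 1), catalan i * Nat.centralBinom (n - i)
        = 4 * ∑ i ∈ range (n + 1), Nat.centralBinom i * Nat.centralBinom (n - i) := by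
      rw [Finset.mul_sum, Finset.mul_sum, ← Finset.sum_add_distrib]
      apply Finset.sum_congr rfl
      intro i _
      have h := cb_rec i
      calc Nat.centralBinom (i + 1) * Nat.centralBinom (n - i)
          + 2 * (catalan i * Nat.centralBinom (n - i))
          = (Nat.centralBinom (i + 1) + 2 * catalan i) * Nat.centralBinom (n - i) := by ring
        _ = 4 * (Nat.centralBinom i * Nat.centralBinom (n - i)) := by rw [h]; ring
    have hI := I_lemma n
    rw [ih] at key
    have hz : Nat.centralBinom 0 = 1 := Nat.centralBinom_zero
    have hsub : n + 1 - 0 = n + 1 := rfl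
    have hp : 4 ^ (n + 1) = 4 * 4 ^ n := by ring
    rw [hz, hsub, one_mul, hp]
    omega

lemma gf {x : ℝ} (h0 : 0 ≤ x) (h1 : x < 1 / 4) :
    HasSum (fun k => (Nat.centralBinom k : ℝ) * x ^ k)
      ((Real.sqrt (1 - 4 * x))⁻¹) := by
  have hb : ∀ k : ℕ, ‖(Nat.centralBinom k : ℝ) * x ^ k‖ ≤ (4 * x) ^ k := by
    intro k
    rw [norm_mul, norm_pow, Real.norm_eq_abs, Real.norm_eq_abs, abs_of_nonneg h0,
      abs_of_nonneg (by positivity), mul_pow]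
    gcongr
    exact_mod_cast cb_le_four_pow k
  have hgeo : Summable fun k : ℕ => (4 * x) ^ k :=
    summable_geometric_of_lt_one (by linarith) (by linarith)
  have hnorm : Summable fun k => ‖(Nat.centralBinom k : ℝ) * x ^ k‖ :=
    Summable.of_nonneg_of_le (fun k => norm_nonneg _) hb hgeo
  have hsum : Summable fun k => (Nat.centralBinom k : ℝ) * x ^ k := hnorm.of_norm
  set T := ∑' k, (Nat.centralBinom k : ℝ) * x ^ k with hT
  have hTT : T * T = (1 - 4 * x)⁻¹ := by
    rw [hT, tsum_mul_tsum_eq_tsum_sum_range_of_summable_norm hnorm hnorm]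
    have heq : ∀ n : ℕ, ∑ k ∈ range (n + 1),
        ((Nat.centralBinom k : ℝ) * x ^ k) * ((Nat.centralBinom (n - k) : ℝ) * x ^ (n - k))
        = (4 * x) ^ n := by
      intro n
      have hterm : ∀ k ∈ range (n + 1),
          ((Nat.centralBinom k : ℝ) * x ^ k) * ((Nat.centralBinom (n - k) : ℝ) * x ^ (n - k))
          = ((Nat.centralBinom k * Nat.centralBinom (n - k) : ℕ) : ℝ) * x ^ n := by
        intro k hk
        have hk' : k ≤ n := Nat.lt_succ_iff.mp (Finset.mem_range.mp hk)
        have hxp : x ^ k * x ^ (n - k) = x ^ n := by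
          rw [← pow_add, Nat.add_sub_cancel' hk']
        push_cast
        rw [← hxp]
        ring
      rw [Finset.sum_congr rfl hterm, ← Finset.sum_mul, ← Nat.cast_sum, conv_four_pow n]
      push_cast
      rw [mul_pow]
    rw [tsum_congr heq, tsum_geometric_of_lt_one (by linarith) (by linarith)]
  have hT1 : (1 : ℝ) ≤ T := by
    have := Summable.le_tsum hsum 0 (fun j _ => by positivity)
    simpa using this
  have hTpos : 0 < T := by linarith
  have hs : Real.sqrt (T * T) = T := Real.sqrt_mul_self hTpos.le
  rw [hTT] at hs
  have hTeq : T = (Real.sqrt (1 - 4 * x))⁻¹ := by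
    rw [← Real.sqrt_inv]; exact hs.symm
  rw [← hTeq]
  exact hsum.hasSum

noncomputable def Fser : ℝ → ℝ :=
  fun t => ∑' k, (Nat.centralBinom k : ℝ) * t ^ (2 * k + 2) / ((2 * k + 2) * 8 ^ k)

lemma u_summable : Summable (fun k : ℕ => (11 / 10 : ℝ) * (121 / 200) ^ k) :=
  (summable_geometric_of_lt_one (by norm_num) (by norm_num)).mul_left _

lemma g_deriv (k : ℕ) (t : ℝ) :
    HasDerivAt (fun t : ℝ => (Nat.centralBinom k : ℝ) * t ^ (2 * k + 2) / ((2 * k + 2) * 8 ^ k))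
      ((Nat.centralBinom k : ℝ) * t ^ (2 * k + 1) / 8 ^ k) t := by
  have h := (hasDerivAt_pow (2 * k + 2) t).const_mul ((Nat.centralBinom k : ℝ))
  have h2 := h.div_const ((2 * k + 2) * 8 ^ k)
  refine h2.congr_deriv ?_
  have h8 : (8 : ℝ) ^ k ≠ 0 := by positivity
  have hk : ((2 : ℝ) * k + 2) ≠ 0 := by positivity
  have hexp : 2 * k + 2 - 1 = 2 * k + 1 := by omega
  rw [hexp]
  push_cast
  field_simp

lemma g_bound (k : ℕ) (t : ℝ) (ht : t ∈ Metric.ball (0 : ℝ) (11 / 10)) :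
    ‖(Nat.centralBinom k : ℝ) * t ^ (2 * k + 1) / 8 ^ k‖ ≤ (11 / 10) * (121 / 200) ^ k := by
  have ht' : |t| < 11 / 10 := by
    simpa [Real.dist_eq] using ht
  have h1 : ‖(Nat.centralBinom k : ℝ) * t ^ (2 * k + 1) / 8 ^ k‖
      = (Nat.centralBinom k : ℝ) * |t| ^ (2 * k + 1) / 8 ^ k := by
    rw [norm_div, norm_mul, norm_pow, Real.norm_eq_abs, Real.norm_eq_abs,
      Real.norm_eq_abs, Nat.abs_cast, abs_of_nonneg (by positivity : (0:ℝ) ≤ 8 ^ k)]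
  rw [h1]
  have hcb : (Nat.centralBinom k : ℝ) ≤ 4 ^ k := by exact_mod_cast cb_le_four_pow k
  have htp : |t| ^ (2 * k + 1) ≤ (11 / 10) ^ (2 * k + 1) :=
    pow_le_pow_left₀ (abs_nonneg t) ht'.le _
  calc (Nat.centralBinom k : ℝ) * |t| ^ (2 * k + 1) / 8 ^ k
      ≤ 4 ^ k * (11 / 10) ^ (2 * k + 1) / 8 ^ k := by
        apply div_le_div_of_nonneg_right ?_ (by positivity)
        · exact mul_le_mul hcb htp (by positivity) (by positivity)
    _ = (11 / 10) * (121 / 200) ^ k := by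
        have h2 : ((11:ℝ)/10) ^ (2 * k + 1) = (121/100 : ℝ) ^ k * (11/10) := by
          rw [pow_succ, pow_mul]; norm_num
        have h3 : (200 : ℝ) ^ k = 2 ^ k * 100 ^ k := by rw [← mul_pow]; norm_num
        have h4 : (8 : ℝ) ^ k = 2 ^ k * 4 ^ k := by rw [← mul_pow]; norm_num
        have e100 : (100 : ℝ) ^ k ≠ 0 := by positivity
        have e2 : (2 : ℝ) ^ k ≠ 0 := by positivity
        have e4 : (4 : ℝ) ^ k ≠ 0 := by positivity
        rw [h2, div_pow, div_pow, h3, h4]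
        field_simp

lemma F_hasDerivAt {t : ℝ} (ht : t ∈ Metric.ball (0 : ℝ) (11 / 10)) :
    HasDerivAt Fser (∑' k, (Nat.centralBinom k : ℝ) * t ^ (2 * k + 1) / 8 ^ k) t := by
  apply hasDerivAt_tsum_of_isPreconnected u_summable Metric.isOpen_ball
    (convex_ball (0:ℝ) (11/10)).isPreconnected
    (fun k y _ => g_deriv k y) (fun k y hy => g_bound k y hy)
    (Metric.mem_ball_self (by norm_num)) ?_ ht
  have hz : (fun k : ℕ => (Nat.centralBinom k : ℝ) * (0:ℝ) ^ (2 * k + 2) / ((2 * k + 2) * 8 ^ k))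
      = fun _ => (0 : ℝ) := by
    funext k; rw [zero_pow (by omega)]; simp
  rw [hz]
  exact summable_zero

lemma deriv_val {t : ℝ} (h0 : 0 ≤ t) (h1 : t ≤ 1) :
    (∑' k, (Nat.centralBinom k : ℝ) * t ^ (2 * k + 1) / 8 ^ k)
      = t * (Real.sqrt (1 - t ^ 2 / 2))⁻¹ := by
  have hx0 : (0 : ℝ) ≤ t ^ 2 / 8 := by positivity
  have hx1 : t ^ 2 / 8 < 1 / 4 := by nlinarith
  have h := (gf hx0 hx1).mul_left t
  have he : (fun k => t * ((Nat.centralBinom k : ℝ) * (t ^ 2 / 8) ^ k))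
      = fun k => (Nat.centralBinom k : ℝ) * t ^ (2 * k + 1) / 8 ^ k := by
    funext k
    have hp : t ^ (2 * k + 1) = (t ^ 2) ^ k * t := by rw [pow_succ, pow_mul]
    rw [hp, div_pow]
    ring
  rw [he] at h
  rw [h.tsum_eq]
  congr 2
  ring

lemma F_one : Fser 1 = 2 - Real.sqrt 2 := by
  set H : ℝ → ℝ := fun t => Fser t + 2 * Real.sqrt (1 - t ^ 2 / 2) with hH
  have hderiv : ∀ t ∈ Set.uIcc (0 : ℝ) 1, HasDerivAt H 0 t := by
    intro t ht
    rw [Set.uIcc_of_le (by norm_num)] at ht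
    obtain ⟨ht0, ht1⟩ := ht
    have htball : t ∈ Metric.ball (0 : ℝ) (11 / 10) := by
      simp only [Metric.mem_ball, Real.dist_eq, sub_zero]
      rw [abs_of_nonneg ht0]; linarith
    have hv : 0 < 1 - t ^ 2 / 2 := by nlinarith
    have hF := F_hasDerivAt htball
    rw [deriv_val ht0 ht1] at hF
    have hinner : HasDerivAt (fun t : ℝ => 1 - t ^ 2 / 2) (-t) t := by
      have h := ((hasDerivAt_pow 2 t).div_const 2).const_sub 1
      refine h.congr_deriv ?_
      norm_num
    have hsq : HasDerivAt (fun t : ℝ => Real.sqrt (1 - t ^ 2 / 2))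
        (1 / (2 * Real.sqrt (1 - t ^ 2 / 2)) * (-t)) t :=
      (Real.hasDerivAt_sqrt hv.ne').comp t hinner
    have hadd := hF.add (hsq.const_mul 2)
    refine hadd.congr_deriv ?_
    rw [one_div, mul_inv]
    ring
  have hint := intervalIntegral.integral_eq_sub_of_hasDerivAt hderiv
    (intervalIntegrable_const (c := (0:ℝ)))
  rw [intervalIntegral.integral_zero] at hint
  have hF0 : Fser 0 = 0 := by
    unfold Fser
    have hz : (fun k : ℕ => (Nat.centralBinom k : ℝ) * (0:ℝ) ^ (2 * k + 2) / ((2 * k + 2) * 8 ^ k))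
        = fun _ => (0 : ℝ) := by
      funext k; rw [zero_pow (by omega)]; simp
    rw [hz, tsum_zero]
  have hH0 : H 0 = 2 := by
    simp only [hH, hF0]
    norm_num
  have hH1 : H 1 = Fser 1 + Real.sqrt 2 := by
    have hs2 : Real.sqrt 2 * Real.sqrt 2 = 2 := Real.mul_self_sqrt (by norm_num)
    have hne : Real.sqrt 2 ≠ 0 := by positivity
    have he : (1 - (1:ℝ) ^ 2 / 2) = 2⁻¹ := by norm_num
    have h22 : (2:ℝ) * (Real.sqrt 2)⁻¹ = Real.sqrt 2 := by
      rw [← div_eq_mul_inv, div_eq_iff hne, hs2]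
    simp only [hH, he, Real.sqrt_inv]
    rw [h22]
  rw [hH1, hH0] at hint
  linarith [hint]

theorem central_binom_series_sqrt_two :
    HasSum
      (fun k : ℕ =>
        (Nat.choose (2 * k) k : ℝ) / (8 ^ k * (2 * (k : ℝ) + 2)))
      (2 - Real.sqrt 2) := by
  have hsum : Summable (fun k : ℕ =>
      (Nat.choose (2 * k) k : ℝ) / (8 ^ k * (2 * (k : ℝ) + 2))) := by
    apply Summable.of_nonneg_of_le (fun k => by positivity)
      (f := fun k : ℕ => (1 / 2 : ℝ) ^ k)
    · intro k
      have hcb : ((Nat.choose (2 * k) k : ℕ) : ℝ) ≤ 4 ^ k := by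
        exact_mod_cast cb_le_four_pow k
      rw [div_le_iff₀ (by positivity)]
      calc ((Nat.choose (2 * k) k : ℕ) : ℝ) ≤ 4 ^ k := hcb
        _ ≤ (1/2)^k * (8 ^ k * (2 * (k:ℝ) + 2)) := by
            rw [← mul_assoc, ← mul_pow]
            norm_num
            have : (0:ℝ) ≤ (k:ℝ) := Nat.cast_nonneg k
            linarith
    · exact summable_geometric_of_lt_one (by norm_num) (by norm_num)
  have heq : (2 : ℝ) - Real.sqrt 2
      = ∑' k, (Nat.choose (2 * k) k : ℝ) / (8 ^ k * (2 * (k : ℝ) + 2)) := by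
    rw [← F_one]
    unfold Fser
    apply tsum_congr
    intro k
    have hc : (Nat.centralBinom k : ℝ) = (Nat.choose (2 * k) k : ℝ) := rfl
    rw [hc, one_pow]
    ring
  rw [heq]
  exact hsum.hasSum
end

section
/- The infinite series Σ_{k=1}^{∞} 2^k / (binom(2k,k) · 2k · (2k+2)) converges and equals (π² - 4π + 8)/32. -/
open MeasureTheory Set Real Filter

noncomputable section CentralBinomAux

namespace CBAux

/-- the Beta-type integral. -/
lemma integral_one_sub_sq_pow (k : ℕ) :
    ∫ c in (0:ℝ)..1, ((1:ℝ) - c^2)^k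
      = (4:ℝ)^k / (((2*k+1) : ℝ) * (Nat.centralBinom k : ℝ)) := by
  induction k with
  | zero => simp [Nat.centralBinom_zero]
  | succ k ih =>
    -- recurrence : (2k+3) * I_{k+1} = (2k+2) * I_k
    have hcont : ∀ m : ℕ, Continuous (fun c : ℝ => ((1:ℝ) - c^2)^m) := by
      intro m; continuity
    have hftc : ∫ c in (0:ℝ)..1,
        ((2*(k:ℝ)+3) * ((1:ℝ) - c^2)^(k+1) - (2*(k:ℝ)+2) * ((1:ℝ) - c^2)^k) = 0 := by
      have hderiv : ∀ c ∈ uIcc (0:ℝ) 1,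
          HasDerivAt (fun c : ℝ => c * ((1:ℝ) - c^2)^(k+1))
            ((2*(k:ℝ)+3) * ((1:ℝ) - c^2)^(k+1) - (2*(k:ℝ)+2) * ((1:ℝ) - c^2)^k) c := by
        intro c _
        have h1 : HasDerivAt (fun c : ℝ => (1:ℝ) - c^2) (-(2*c)) c := by
          simpa using ((hasDerivAt_pow 2 c).const_sub 1)
        have h2 : HasDerivAt (fun c : ℝ => ((1:ℝ) - c^2)^(k+1))
            ((k+1 : ℕ) * ((1:ℝ) - c^2)^k * (-(2*c))) c := by
          exact (HasDerivAt.fun_pow h1 (k+1))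
        have h3 := (hasDerivAt_id c).mul h2
        refine h3.congr_deriv ?_
        simp only [id_eq]
        push_cast
        ring
      have := intervalIntegral.integral_eq_sub_of_hasDerivAt hderiv
        (Continuous.intervalIntegrable (by continuity) 0 1)
      simpa using this
    have hsub : ∫ c in (0:ℝ)..1,
        ((2*(k:ℝ)+3) * ((1:ℝ) - c^2)^(k+1) - (2*(k:ℝ)+2) * ((1:ℝ) - c^2)^k)
        = (2*(k:ℝ)+3) * (∫ c in (0:ℝ)..1, ((1:ℝ) - c^2)^(k+1))
          - (2*(k:ℝ)+2) * (∫ c in (0:ℝ)..1, ((1:ℝ) - c^2)^k) := by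
      rw [intervalIntegral.integral_sub ((Continuous.intervalIntegrable (by continuity) 0 1))
        ((Continuous.intervalIntegrable (by continuity) 0 1)),
        intervalIntegral.integral_const_mul, intervalIntegral.integral_const_mul]
    have hrec : (2*(k:ℝ)+3) * (∫ c in (0:ℝ)..1, ((1:ℝ) - c^2)^(k+1))
          = (2*(k:ℝ)+2) * (∫ c in (0:ℝ)..1, ((1:ℝ) - c^2)^k) := by
      have := hftc; rw [hsub] at this; linarith
    rw [ih] at hrec
    have hCB : ((k:ℝ)+1) * (Nat.centralBinom (k+1) : ℝ)
        = 2 * (2*(k:ℝ)+1) * (Nat.centralBinom k : ℝ) := by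
      have := Nat.succ_mul_centralBinom_succ k
      have h2 : ((k + 1) * Nat.centralBinom (k + 1) : ℕ) = (2 * (2 * k + 1) * Nat.centralBinom k : ℕ) := this
      have := congrArg (fun n : ℕ => (n : ℝ)) h2
      push_cast at this
      linarith
    have hk3 : (2*(k:ℝ)+3) ≠ 0 := by positivity
    have hcb : (Nat.centralBinom k : ℝ) ≠ 0 := by
      exact_mod_cast Nat.centralBinom_ne_zero k
    have hcb1 : (Nat.centralBinom (k+1) : ℝ) ≠ 0 := by
      exact_mod_cast Nat.centralBinom_ne_zero (k+1)
    have h2k1 : (2*(k:ℝ)+1) ≠ 0 := by positivity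
    have hk1 : ((k:ℝ)+1) ≠ 0 := by positivity
    have : (∫ c in (0:ℝ)..1, ((1:ℝ) - c^2)^(k+1))
        = (2*(k:ℝ)+2) * ((4:ℝ)^k / ((2*(k:ℝ)+1) * (Nat.centralBinom k : ℝ))) / (2*(k:ℝ)+3) := by
      field_simp at hrec ⊢
      linarith
    rw [this]
    push_cast
    rw [div_eq_div_iff (by positivity) (by positivity)]
    field_simp
    -- use hCB to replace centralBinom (k+1)
    have : (Nat.centralBinom (k+1) : ℝ) = 2 * (2*(k:ℝ)+1) * (Nat.centralBinom k : ℝ) / ((k:ℝ)+1) := by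
      field_simp
      linarith [hCB]
    rw [this]
    field_simp
    ring

/-- value of each term of the series as an integral over `Ioo 0 1`. -/
lemma term_integral (k : ℕ) :
    (∫ c in Ioo (0:ℝ) 1,
        ((2*(k:ℝ)+3)/(4*((k:ℝ)+1)*((k:ℝ)+2))) * (((1:ℝ) - c^2)/2)^(k+1))
      = (2 : ℝ) ^ (k + 1) /
          ((Nat.choose (2 * (k + 1)) (k + 1) : ℝ) * (2 * ((k : ℝ) + 1)) *
            (2 * ((k : ℝ) + 1) + 2)) := by
  have h0 : (∫ c in Ioo (0:ℝ) 1,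
        ((2*(k:ℝ)+3)/(4*((k:ℝ)+1)*((k:ℝ)+2))) * (((1:ℝ) - c^2)/2)^(k+1))
      = ∫ c in (0:ℝ)..1,
        ((2*(k:ℝ)+3)/(4*((k:ℝ)+1)*((k:ℝ)+2))) * (((1:ℝ) - c^2)/2)^(k+1) := by
    rw [intervalIntegral.integral_of_le zero_le_one, MeasureTheory.integral_Ioc_eq_integral_Ioo]
  rw [h0]
  have h1 : ∀ c : ℝ, ((2*(k:ℝ)+3)/(4*((k:ℝ)+1)*((k:ℝ)+2))) * (((1:ℝ) - c^2)/2)^(k+1)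
      = ((2*(k:ℝ)+3)/(4*((k:ℝ)+1)*((k:ℝ)+2)) / 2^(k+1)) * ((1:ℝ) - c^2)^(k+1) := by
    intro c; rw [div_pow]; ring
  simp only [h1]
  rw [intervalIntegral.integral_const_mul, integral_one_sub_sq_pow]
  have hch : (Nat.choose (2 * (k + 1)) (k + 1) : ℝ) = (Nat.centralBinom (k+1) : ℝ) := by
    rw [Nat.centralBinom_eq_two_mul_choose]
  rw [hch]
  have hcb : (Nat.centralBinom (k+1) : ℝ) ≠ 0 := by
    exact_mod_cast Nat.centralBinom_ne_zero (k+1)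
  have e1 : ((2*(k+1)+1 : ℕ) : ℝ) = 2*(k:ℝ)+3 := by push_cast; ring
  push_cast
  have h4 : (4:ℝ)^(k+1) = 2^(k+1) * 2^(k+1) := by
    rw [← mul_pow]; norm_num
  rw [h4]
  have h2 : ((2:ℝ)^(k+1)) ≠ 0 := by positivity
  field_simp
  ring

/-- pointwise sum of the series of integrands. -/
lemma pointwise_hasSum {c : ℝ} (hc : c ∈ Ioo (0:ℝ) 1) :
    HasSum (fun k : ℕ =>
        ((2*(k:ℝ)+3)/(4*((k:ℝ)+1)*((k:ℝ)+2))) * (((1:ℝ) - c^2)/2)^(k+1))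
      ((1/4) * ((-Real.log ((1 + c^2)/2)) * (1 + 2/(1 - c^2)) - 1)) := by
  obtain ⟨hc0, hc1⟩ := hc
  set u : ℝ := (1 - c^2)/2 with hu
  have hu0 : 0 < u := by
    have : c^2 < 1 := by nlinarith
    simp only [hu]; linarith
  have hu2 : u < 1/2 := by
    have : 0 < c^2 := by positivity
    simp only [hu]; linarith
  have habs : |u| < 1 := by rw [abs_of_pos hu0]; linarith
  have h1 : HasSum (fun n : ℕ => u ^ (n+1) / (n+1)) (-Real.log (1 - u)) :=
    Real.hasSum_pow_div_log_of_abs_lt_one habs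
  have h2 : HasSum (fun n : ℕ => u ^ (n+2) / (n+2))
      (-Real.log (1 - u) - u) := by
    have := (hasSum_nat_add_iff' (f := fun n : ℕ => u ^ (n+1) / (n+1)) 1).2 h1
    simp only [Finset.range_one, Finset.sum_singleton] at this
    convert this using 2 with n
    · rfl
    · push_cast; ring_nf
    · norm_num
  have h3 := (h1.mul_left (1/4)).add (h2.mul_left (1/(4*u)))
  have hune : u ≠ 0 := ne_of_gt hu0
  have hueq : 1 - u = (1 + c^2)/2 := by simp only [hu]; ring
  have hcc : (1 - c^2) ≠ 0 := by nlinarith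
  have h2u : 2/(1 - c^2) = 1/u := by
    rw [hu]; field_simp
  rw [h2u, ← hueq]
  convert h3 using 1
  · rfl
  · funext k
    have hk1 : ((k:ℝ)+1) ≠ 0 := by positivity
    have hk2 : ((k:ℝ)+2) ≠ 0 := by positivity
    field_simp
    ring
  · field_simp
    ring

/-- Step 1 : exchange sum and integral. -/
lemma step1 : HasSum (fun k : ℕ =>
      ∫ c in Ioo (0:ℝ) 1,
        ((2*(k:ℝ)+3)/(4*((k:ℝ)+1)*((k:ℝ)+2))) * (((1:ℝ) - c^2)/2)^(k+1))
    (∫ c in Ioo (0:ℝ) 1,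
      (1/4) * ((-Real.log ((1 + c^2)/2)) * (1 + 2/(1 - c^2)) - 1)) := by
  apply MeasureTheory.hasSum_integral_of_dominated_convergence
    (bound := fun (k : ℕ) (_ : ℝ) => ((1:ℝ)/2)^(k+1))
  · intro k
    apply Continuous.aestronglyMeasurable
    continuity
  · intro k
    rw [ae_restrict_iff' measurableSet_Ioo]
    refine ae_of_all _ fun c hc => ?_
    obtain ⟨hc0, hc1⟩ := hc
    have hu0 : (0:ℝ) ≤ (1 - c^2)/2 := by nlinarith
    have hu2 : (1 - c^2)/2 ≤ 1/2 := by nlinarith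
    have hcoef0 : (0:ℝ) ≤ (2*(k:ℝ)+3)/(4*((k:ℝ)+1)*((k:ℝ)+2)) := by positivity
    have hcoef1 : (2*(k:ℝ)+3)/(4*((k:ℝ)+1)*((k:ℝ)+2)) ≤ 1 := by
      rw [div_le_one (by positivity)]
      nlinarith [sq_nonneg (k:ℝ)]
    rw [Real.norm_eq_abs, abs_of_nonneg (by positivity)]
    calc (2*(k:ℝ)+3)/(4*((k:ℝ)+1)*((k:ℝ)+2)) * (((1:ℝ) - c^2)/2)^(k+1)
        ≤ 1 * (((1:ℝ)/2))^(k+1) := by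
          apply mul_le_mul hcoef1 (pow_le_pow_left₀ hu0 hu2 _) (by positivity) zero_le_one
      _ = ((1:ℝ)/2)^(k+1) := one_mul _
  · refine ae_of_all _ fun c => ?_
    apply Summable.comp_injective (f := fun n : ℕ => ((1:ℝ)/2)^n)
      (summable_geometric_of_lt_one (by norm_num) (by norm_num))
    exact fun a b h => by simpa using h
  · exact integrableOn_const measure_Ioo_lt_top.ne
  · rw [ae_restrict_iff' measurableSet_Ioo]
    exact ae_of_all _ fun c hc => pointwise_hasSum hc

/-- elementary part by FTC. -/
lemma elementary_part :
    ∫ c in Ioo (0:ℝ) 1, (-Real.log ((1 + c^2)/2)) = 2 - π/2 := by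
  have h0 : (∫ c in Ioo (0:ℝ) 1, (-Real.log ((1 + c^2)/2)))
      = ∫ c in (0:ℝ)..1, (-Real.log ((1 + c^2)/2)) := by
    rw [intervalIntegral.integral_of_le zero_le_one, MeasureTheory.integral_Ioc_eq_integral_Ioo]
  rw [h0]
  have hderiv : ∀ c ∈ uIcc (0:ℝ) 1,
      HasDerivAt (fun c : ℝ => -(c * Real.log ((1 + c^2)/2) - 2*c + 2*Real.arctan c))
        (-Real.log ((1 + c^2)/2)) c := by
    intro c _
    have hpos : (0:ℝ) < (1 + c^2)/2 := by positivity
    have hg : HasDerivAt (fun c : ℝ => (1 + c^2)/2) c c := by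
      have := ((hasDerivAt_pow 2 c).const_add 1).div_const 2
      simpa using this
    have hlog : HasDerivAt (fun c : ℝ => Real.log ((1 + c^2)/2)) (c / ((1 + c^2)/2)) c :=
      hg.log (ne_of_gt hpos)
    have h1 : HasDerivAt (fun c : ℝ => c * Real.log ((1 + c^2)/2))
        (1 * Real.log ((1 + c^2)/2) + c * (c / ((1 + c^2)/2))) c :=
      (hasDerivAt_id c).mul hlog
    have h2 : HasDerivAt (fun c : ℝ => 2*c) 2 c := by
      simpa using (hasDerivAt_id c).const_mul 2
    have h3 : HasDerivAt (fun c : ℝ => 2*Real.arctan c) (2 * (1/(1+c^2))) c :=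
      (Real.hasDerivAt_arctan c).const_mul 2
    have h4 := ((h1.sub h2).add h3).neg
    refine h4.congr_deriv ?_
    have hne : (1 + c^2) ≠ 0 := by positivity
    field_simp
    ring
  have hcont : Continuous (fun c : ℝ => -Real.log ((1 + c^2)/2)) := by
    apply Continuous.neg
    apply Continuous.log (by continuity)
    intro x; positivity
  rw [intervalIntegral.integral_eq_sub_of_hasDerivAt hderiv
    (Continuous.intervalIntegrable hcont 0 1)]
  norm_num [Real.arctan_one, Real.log_one]
  ring

/-- change of variables `c = (1-s)/(1+s)`. -/
lemma change_of_var :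
    (∫ c in Ioo (0:ℝ) 1, (-Real.log ((1 + c^2)/2)) * (2/(1 - c^2)))
      = ∫ s in Ioo (0:ℝ) 1, (2*Real.log (1+s) - Real.log (1+s^2))/s := by
  have himg : (fun s : ℝ => (1-s)/(1+s)) '' Ioo (0:ℝ) 1 = Ioo (0:ℝ) 1 := by
    ext y
    constructor
    · rintro ⟨x, ⟨hx0, hx1⟩, rfl⟩
      constructor
      · apply div_pos <;> linarith
      · rw [div_lt_one (by linarith)]; linarith
    · rintro ⟨hy0, hy1⟩
      refine ⟨(1-y)/(1+y), ⟨div_pos (by linarith) (by linarith),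
        by rw [div_lt_one (by linarith)]; linarith⟩, ?_⟩
      have h1 : (1:ℝ) + y ≠ 0 := by linarith
      field_simp
      ring
  have hderiv : ∀ s ∈ Ioo (0:ℝ) 1,
      HasDerivWithinAt (fun s : ℝ => (1-s)/(1+s)) (-2/(1+s)^2) (Ioo (0:ℝ) 1) s := by
    intro s hs
    have hne : (1:ℝ) + s ≠ 0 := by linarith [hs.1]
    have h1 : HasDerivAt (fun s : ℝ => (1:ℝ)-s) (-1) s := by
      simpa using (hasDerivAt_id s).const_sub 1
    have h2 : HasDerivAt (fun s : ℝ => (1:ℝ)+s) 1 s := by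
      simpa using (hasDerivAt_id s).const_add 1
    have := h1.div h2 hne
    apply HasDerivAt.hasDerivWithinAt
    refine this.congr_deriv ?_
    ring
  have hinj : InjOn (fun s : ℝ => (1-s)/(1+s)) (Ioo (0:ℝ) 1) := by
    rintro a ⟨ha0, ha1⟩ b ⟨hb0, hb1⟩ hab
    have h1 : (1:ℝ) + a ≠ 0 := by linarith
    have h2 : (1:ℝ) + b ≠ 0 := by linarith
    field_simp at hab
    nlinarith [hab]
  have := MeasureTheory.integral_image_eq_integral_abs_deriv_smul measurableSet_Ioo hderiv hinj
    (fun c : ℝ => (-Real.log ((1 + c^2)/2)) * (2/(1 - c^2)))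
  rw [himg] at this
  rw [this]
  apply MeasureTheory.setIntegral_congr_fun measurableSet_Ioo
  intro s hs
  obtain ⟨hs0, hs1⟩ := hs
  have hne : (1:ℝ) + s ≠ 0 := by linarith
  have hsne : s ≠ 0 := ne_of_gt hs0
  have e1 : (1 + ((1-s)/(1+s))^2)/2 = (1+s^2)/(1+s)^2 := by
    field_simp
    ring
  have e2 : 1 - ((1-s)/(1+s))^2 = 4*s/(1+s)^2 := by
    field_simp
    ring
  simp only [smul_eq_mul]
  rw [e1, e2]
  have hlog : Real.log ((1+s^2)/(1+s)^2) = Real.log (1+s^2) - 2*Real.log (1+s) := by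
    rw [Real.log_div (by positivity) (by positivity), Real.log_pow]
    push_cast
    ring
  rw [hlog]
  have habs : |(-2)/(1+s)^2| = 2/(1+s)^2 := by
    rw [abs_div]
    simp [abs_of_nonneg (sq_nonneg (1+s)), abs_of_nonpos (show (-2:ℝ) ≤ 0 by norm_num)]
  rw [habs]
  field_simp
  ring

/-- alternating Basel problem. -/
lemma alt_basel : HasSum (fun n : ℕ => ((-1:ℝ))^n / ((n:ℝ)+1)^2) (π^2/12) := by
  set g : ℕ → ℝ := fun n => 1/((n:ℝ)+1)^2 with hg
  have hG : HasSum g (π^2/6) := by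
    have h := (hasSum_nat_add_iff' (f := fun n : ℕ => (1:ℝ)/(n:ℝ)^2) 1).2 hasSum_zeta_two
    simp only [Finset.range_one, Finset.sum_singleton, Nat.cast_zero] at h
    norm_num at h
    have he : g = (fun n : ℕ => (((n:ℝ)+1)^2)⁻¹) := by
      funext n; simp [hg, one_div]
    rw [he]
    exact h
  have hodd : HasSum (fun m : ℕ => g (2*m+1)) (π^2/24) := by
    have h := hG.mul_left (1/4)
    have he : (fun m : ℕ => g (2*m+1)) = (fun i : ℕ => 1/4 * g i) := by
      funext m
      simp only [hg]
      push_cast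
      have h1 : ((2:ℝ)*m+1+1)^2 = 4*((m:ℝ)+1)^2 := by ring
      rw [h1]
      have h2 : ((m:ℝ)+1)^2 ≠ 0 := by positivity
      field_simp
    rw [he]
    convert h using 1
    · rfl
    ring
  have hevenS : Summable (fun m : ℕ => g (2*m)) :=
    hG.summable.comp_injective (mul_right_injective₀ two_ne_zero)
  have heven : HasSum (fun m : ℕ => g (2*m)) (∑' m, g (2*m)) := hevenS.hasSum
  have htot := HasSum.even_add_odd (f := g) heven hodd
  have hE : (∑' m, g (2*m)) = π^2/8 := by
    have := htot.unique hG
    linarith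
  rw [hE] at heven
  have heven2 : HasSum (fun m : ℕ => ((-1:ℝ))^(2*m) / (((2*m:ℕ):ℝ)+1)^2) (π^2/8) := by
    have he : (fun m : ℕ => ((-1:ℝ))^(2*m) / (((2*m:ℕ):ℝ)+1)^2) = (fun m : ℕ => g (2*m)) := by
      funext m
      simp only [hg, pow_mul, neg_one_sq, one_pow]
    rw [he]; exact heven
  have hodd2 : HasSum (fun m : ℕ => ((-1:ℝ))^(2*m+1) / (((2*m+1:ℕ):ℝ)+1)^2) (-(π^2/24)) := by
    have he : (fun m : ℕ => ((-1:ℝ))^(2*m+1) / (((2*m+1:ℕ):ℝ)+1)^2) = (fun m : ℕ => -(g (2*m+1))) := by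
      funext m
      simp only [hg, pow_succ, pow_mul, neg_one_sq, one_pow, one_mul]
      push_cast
      ring
    rw [he]; exact hodd.neg
  have hfin := HasSum.even_add_odd (f := fun n : ℕ => ((-1:ℝ))^n / ((n:ℝ)+1)^2) heven2 hodd2
  convert hfin using 1
  ring

-- integrability of the dominating function
lemma integrable_dom :
    IntegrableOn (fun s : ℝ => 6 + 12*(1-s)^(-(1/2) : ℝ)) (Ioo (0:ℝ) 1) := by
  apply Integrable.add
  · exact integrableOn_const measure_Ioo_lt_top.ne
  · have h1 : IntervalIntegrable (fun x : ℝ => x ^ (-(1/2) : ℝ)) volume 0 1 :=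
      intervalIntegral.intervalIntegrable_rpow' (by norm_num)
    have h2 := (h1.comp_sub_left 1).symm
    have h3 : IntervalIntegrable (fun x : ℝ => (1-x) ^ (-(1/2) : ℝ)) volume 0 1 := by
      simpa using h2
    have h4 : IntegrableOn (fun x : ℝ => (1-x) ^ (-(1/2) : ℝ)) (Ioc (0:ℝ) 1) := h3.1
    exact (h4.mono_set Ioo_subset_Ioc_self).const_mul 12

-- the dominating bound
lemma log_bound {s : ℝ} (hs : s ∈ Ioo (0:ℝ) 1) :
    3*(-Real.log (1-s))/s ≤ 6 + 12*(1-s)^(-(1/2) : ℝ) := by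
  obtain ⟨hs0, hs1⟩ := hs
  have h1 : (0:ℝ) < 1 - s := by linarith
  have hLpos : 0 ≤ -Real.log (1-s) := by
    simpa using Real.log_nonpos (by linarith) (by linarith)
  have key : -Real.log (1-s)/s ≤ 2 + 2*(-Real.log (1-s)) := by
    rcases le_or_gt s (1/2) with h|h
    · have hs2 : -Real.log (1-s) ≤ 2*s := by
        have := Real.log_le_sub_one_of_pos (x := (1-s)⁻¹) (by positivity)
        rw [Real.log_inv] at this
        have h3 : (1-s)⁻¹ - 1 = s/(1-s) := by field_simp; ring
        rw [h3] at this
        have h4 : s/(1-s) ≤ 2*s := by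
          rw [div_le_iff₀ h1]; nlinarith
        linarith
      have : -Real.log (1-s)/s ≤ 2 := by
        rw [div_le_iff₀ hs0]; linarith
      linarith
    · have : -Real.log (1-s)/s ≤ 2*(-Real.log (1-s)) := by
        rw [div_le_iff₀ hs0]; nlinarith
      linarith
  have hsqrt : -Real.log (1-s) ≤ 2*(1-s)^(-(1/2) : ℝ) := by
    have hlog : Real.log ((1-s)^(-(1/2) : ℝ)) = -(1/2) * Real.log (1-s) :=
      Real.log_rpow h1 _
    have := Real.log_le_sub_one_of_pos (x := (1-s)^(-(1/2) : ℝ)) (by positivity)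
    rw [hlog] at this
    have h5 : (0:ℝ) ≤ (1-s)^(-(1/2) : ℝ) := by positivity
    linarith
  have h6 : 3*(-Real.log (1-s))/s = 3 * (-Real.log (1-s)/s) := by ring
  rw [h6]
  calc 3 * (-Real.log (1-s)/s) ≤ 3 * (2 + 2*(-Real.log (1-s))) := by linarith
    _ = 6 + 6*(-Real.log (1-s)) := by ring
    _ ≤ 6 + 12*(1-s)^(-(1/2) : ℝ) := by linarith

lemma sside : HasSum (fun n : ℕ => ((-1:ℝ))^n * (3/2) / ((n:ℝ)+1)^2)
    (∫ s in Ioo (0:ℝ) 1, (2*Real.log (1+s) - Real.log (1+s^2))/s) := by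
  have hDC : HasSum (fun n : ℕ =>
      ∫ s in Ioo (0:ℝ) 1, ((-1:ℝ))^n/((n:ℝ)+1) * (2*s^n - s^(2*n+1)))
      (∫ s in Ioo (0:ℝ) 1, (2*Real.log (1+s) - Real.log (1+s^2))/s) := by
    apply MeasureTheory.hasSum_integral_of_dominated_convergence
      (bound := fun (n : ℕ) (s : ℝ) => 3*s^n/((n:ℝ)+1))
    · intro n
      apply Continuous.aestronglyMeasurable
      continuity
    · intro n
      rw [ae_restrict_iff' measurableSet_Ioo]
      refine ae_of_all _ fun s hs => ?_
      obtain ⟨hs0, hs1⟩ := hs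
      have h1 : (0:ℝ) ≤ s^(2*n+1) := by positivity
      have h2 : s^(2*n+1) ≤ s^n := by
        exact pow_le_pow_of_le_one (le_of_lt hs0) (le_of_lt hs1) (by omega)
      have h3 : |2*s^n - s^(2*n+1)| ≤ 3*s^n := by
        rw [abs_le]
        constructor <;> nlinarith [pow_nonneg (le_of_lt hs0) n]
      rw [Real.norm_eq_abs, abs_mul, abs_div, abs_pow, abs_neg, abs_one, one_pow]
      rw [abs_of_nonneg (by positivity : (0:ℝ) ≤ (n:ℝ)+1)]
      calc 1/((n:ℝ)+1) * |2*s^n - s^(2*n+1)| ≤ 1/((n:ℝ)+1) * (3*s^n) := by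
            apply mul_le_mul_of_nonneg_left h3 (by positivity)
        _ = 3*s^n/((n:ℝ)+1) := by ring
    · rw [ae_restrict_iff' measurableSet_Ioo]
      refine ae_of_all _ fun s hs => ?_
      obtain ⟨hs0, hs1⟩ := hs
      apply Summable.of_nonneg_of_le (fun n => by positivity)
        (fun n => ?_) (((summable_geometric_of_lt_one (le_of_lt hs0) hs1)).mul_left 3)
      have hle : (1:ℝ) ≤ (n:ℝ)+1 := by
        have := Nat.cast_nonneg (α := ℝ) n; linarith
      exact div_le_self (by positivity) hle
    · -- bound_integrable
      have hfint : IntegrableOn (fun s : ℝ => 3*(-Real.log (1-s))/s) (Ioo (0:ℝ) 1) := by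
        apply Integrable.mono' integrable_dom
        · apply Measurable.aestronglyMeasurable
          apply Measurable.div
          · exact ((Real.measurable_log.comp (measurable_const.sub measurable_id)).neg.const_mul 3)
          · exact measurable_id
        · rw [ae_restrict_iff' measurableSet_Ioo]
          refine ae_of_all _ fun s hs => ?_
          obtain ⟨hs0, hs1⟩ := hs
          have hLpos : 0 ≤ -Real.log (1-s) := by
            simpa using Real.log_nonpos (by linarith) (by linarith)
          rw [Real.norm_eq_abs, abs_of_nonneg (by positivity)]
          exact log_bound ⟨hs0, hs1⟩
      apply hfint.congr
      apply Filter.eventuallyEq_of_mem (self_mem_ae_restrict measurableSet_Ioo)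
      intro s hs
      obtain ⟨hs0, hs1⟩ := hs
      have hsne : s ≠ 0 := ne_of_gt hs0
      have habs : |s| < 1 := by rw [abs_of_pos hs0]; exact hs1
      have h1 := (Real.hasSum_pow_div_log_of_abs_lt_one habs).mul_left (3/s)
      have he : (fun n : ℕ => 3/s * (s^(n+1)/((n:ℝ)+1))) = (fun n : ℕ => 3*s^n/((n:ℝ)+1)) := by
        funext n
        have hn : ((n:ℝ)+1) ≠ 0 := by positivity
        field_simp
        ring
      rw [he] at h1
      show 3 * -Real.log (1-s) / s = ∑' (n : ℕ), 3 * s ^ n / ((n:ℝ) + 1)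
      rw [h1.tsum_eq]
      ring
    · rw [ae_restrict_iff' measurableSet_Ioo]
      refine ae_of_all _ fun s hs => ?_
      obtain ⟨hs0, hs1⟩ := hs
      have hsne : s ≠ 0 := ne_of_gt hs0
      have ha1 : |(-s)| < 1 := by rw [abs_neg, abs_of_pos hs0]; exact hs1
      have ha2 : |(-(s^2))| < 1 := by
        rw [abs_neg, abs_of_pos (by positivity)]; nlinarith
      have h1 := (Real.hasSum_pow_div_log_of_abs_lt_one ha1).mul_left (-2/s)
      have h2 := (Real.hasSum_pow_div_log_of_abs_lt_one ha2).mul_left (1/s)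
      have h3 := h1.add h2
      have he : (fun n : ℕ => -2/s * ((-s)^(n+1)/((n:ℝ)+1)) + 1/s * ((-(s^2))^(n+1)/((n:ℝ)+1)))
          = (fun n : ℕ => ((-1:ℝ))^n/((n:ℝ)+1) * (2*s^n - s^(2*n+1))) := by
        funext n
        have e1 : (-s)^(n+1) = (-1)^(n+1) * s^(n+1) := by
          rw [neg_pow]
        have e2 : (-(s^2))^(n+1) = (-1)^(n+1) * s^(2*(n+1)) := by
          rw [neg_pow, ← pow_mul]
        rw [e1, e2]
        have hn : ((n:ℝ)+1) ≠ 0 := by positivity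
        field_simp
        ring
      rw [he] at h3
      convert h3 using 1
      · rfl
      have hl1 : 1 - -s = 1 + s := by ring
      have hl2 : 1 - -(s^2) = 1 + s^2 := by ring
      rw [hl1, hl2]
      field_simp
      ring
  have hval : ∀ n : ℕ, (∫ s in Ioo (0:ℝ) 1, ((-1:ℝ))^n/((n:ℝ)+1) * (2*s^n - s^(2*n+1)))
      = ((-1:ℝ))^n * (3/2) / ((n:ℝ)+1)^2 := by
    intro n
    rw [← MeasureTheory.integral_Ioc_eq_integral_Ioo,
      ← intervalIntegral.integral_of_le zero_le_one]
    rw [intervalIntegral.integral_const_mul]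
    rw [intervalIntegral.integral_sub ((Continuous.intervalIntegrable (by continuity) 0 1))
      ((Continuous.intervalIntegrable (by continuity) 0 1)),
      intervalIntegral.integral_const_mul, integral_pow, integral_pow]
    have hn : ((n:ℝ)+1) ≠ 0 := by positivity
    have hn2 : ((2*n+1:ℕ):ℝ)+1 = 2*((n:ℝ)+1) := by push_cast; ring
    norm_num
    have h2n : (2*(n:ℝ)+1+1) = 2*((n:ℝ)+1) := by ring
    rw [h2n]
    field_simp
    ring
  simpa only [hval] using hDC

lemma hard_part :
    (∫ c in Ioo (0:ℝ) 1, (-Real.log ((1 + c^2)/2)) * (2/(1 - c^2))) = π^2/8 := by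
  rw [change_of_var]
  have h1 := sside
  have h2 : HasSum (fun n : ℕ => ((-1:ℝ))^n * (3/2) / ((n:ℝ)+1)^2) ((3/2) * (π^2/12)) := by
    have := alt_basel.mul_left (3/2)
    convert this using 2 with n
    · rfl
    ring
  have := h1.unique h2
  rw [this]; ring

/-- integrability of the two pieces. -/
lemma integrable_piece1 :
    IntegrableOn (fun c : ℝ => -Real.log ((1 + c^2)/2)) (Ioo (0:ℝ) 1) := by
  have hcont : Continuous (fun c : ℝ => -Real.log ((1 + c^2)/2)) := by
    apply Continuous.neg
    apply Continuous.log (by continuity)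
    intro x; positivity
  exact (hcont.integrableOn_Icc (a := 0) (b := 1)).mono_set Ioo_subset_Icc_self

lemma integrable_piece2 :
    IntegrableOn (fun c : ℝ => (-Real.log ((1 + c^2)/2)) * (2/(1 - c^2)))
      (Ioo (0:ℝ) 1) := by
  have hmeas : AEStronglyMeasurable
      (fun c : ℝ => (-Real.log ((1 + c^2)/2)) * (2/(1 - c^2)))
      (volume.restrict (Ioo (0:ℝ) 1)) := by
    apply Measurable.aestronglyMeasurable
    apply Measurable.mul
    · exact (Real.measurable_log.comp (by measurability)).neg
    · measurability
  apply Integrable.mono' (g := fun _ : ℝ => (2:ℝ))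
    (integrableOn_const measure_Ioo_lt_top.ne) hmeas
  rw [ae_restrict_iff' measurableSet_Ioo]
  refine ae_of_all _ fun c hc => ?_
  obtain ⟨hc0, hc1⟩ := hc
  have h1 : (0:ℝ) < 1 - c^2 := by nlinarith
  have h2 : (0:ℝ) < 1 + c^2 := by positivity
  have hL : Real.log ((1 + c^2)/2) ≤ 0 := by
    apply Real.log_nonpos (by positivity)
    rw [div_le_one (by norm_num)]
    nlinarith
  have hL2 : -Real.log ((1 + c^2)/2) ≤ (1 - c^2)/(1 + c^2) := by
    have := Real.log_le_sub_one_of_pos (x := 2/(1+c^2)) (by positivity)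
    have hlg : Real.log (2/(1+c^2)) = -Real.log ((1 + c^2)/2) := by
      rw [← Real.log_inv]
      congr 1
      field_simp
    rw [hlg] at this
    calc -Real.log ((1 + c^2)/2) ≤ 2/(1+c^2) - 1 := this
      _ = (1 - c^2)/(1 + c^2) := by field_simp; ring
  have hLpos : 0 ≤ -Real.log ((1 + c^2)/2) := by linarith
  rw [Real.norm_eq_abs, abs_of_nonneg (mul_nonneg hLpos (by positivity))]
  calc (-Real.log ((1 + c^2)/2)) * (2/(1 - c^2))
      ≤ ((1 - c^2)/(1 + c^2)) * (2/(1 - c^2)) := by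
        apply mul_le_mul_of_nonneg_right hL2 (by positivity)
    _ = 2/(1+c^2) := by field_simp
    _ ≤ 2 := by
        rw [div_le_iff₀ h2]; nlinarith

lemma total_integral :
    (∫ c in Ioo (0:ℝ) 1,
        (1/4) * ((-Real.log ((1 + c^2)/2)) * (1 + 2/(1 - c^2)) - 1))
      = (π ^ 2 - 4 * π + 8) / 32 := by
  have hsplit : ∀ c : ℝ,
      (1/4) * ((-Real.log ((1 + c^2)/2)) * (1 + 2/(1 - c^2)) - 1)
        = (1/4) * ((-Real.log ((1 + c^2)/2))
            + ((-Real.log ((1 + c^2)/2)) * (2/(1 - c^2))) - 1) := by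
    intro c; ring
  simp only [hsplit]
  rw [MeasureTheory.integral_const_mul]
  have hadd : IntegrableOn
      (fun c : ℝ => -Real.log ((1 + c^2)/2) + -Real.log ((1 + c^2)/2) * (2/(1 - c^2)))
      (Ioo (0:ℝ) 1) := integrable_piece1.add integrable_piece2
  have hconst : IntegrableOn (fun _ : ℝ => (1:ℝ)) (Ioo (0:ℝ) 1) :=
    integrableOn_const measure_Ioo_lt_top.ne
  rw [integral_sub hadd hconst]
  rw [integral_add integrable_piece1 integrable_piece2]
  rw [elementary_part, hard_part]
  simp [Real.volume_Ioo]
  ring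

end CBAux

end CentralBinomAux

theorem inv_central_binom_series_pi_sq :
    HasSum
      (fun k : ℕ =>
        (2 : ℝ) ^ (k + 1) /
          ((Nat.choose (2 * (k + 1)) (k + 1) : ℝ) * (2 * ((k : ℝ) + 1)) *
            (2 * ((k : ℝ) + 1) + 2)))
      ((Real.pi ^ 2 - 4 * Real.pi + 8) / 32) := by
  have h := CBAux.step1
  simp only [CBAux.term_integral] at h
  rwa [CBAux.total_integral] at h
end
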